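/- arXiv:2208.06791 — 7 statements merged into one kernel-verified Lean document; each statement's English description precedes it below -/
import Mathlib

section
/- For all integers n ≥ k+1, the probability that X_n is a j-recent-k-record equals binom(k,j) · Σ_{i=1}^∞ S_i^j · C_{i-1}^{k-j} · p_i, where the sum runs over all positive integers i. -/
open MeasureTheory ProbabilityTheory

/-- For all integers `n ≥ k+1`, the probability that `Xₙ` is a `j`-recent-`k`-record
(exactly `j` of `X_{n-k}, …, X_{n-1}` are `≥ Xₙ`) equals
`C(k,j) * ∑_{i=1}^∞ Sᵢ^j * C_{i-1}^{k-j} * pᵢ`. -/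
theorem recent_k_record_prob
    {Ω : Type*} [MeasurableSpace Ω] (P : Measure Ω) [IsProbabilityMeasure P]
    (X : ℕ → Ω → ℕ) (hXmeas : ∀ a, Measurable (X a))
    (hXpos : ∀ a ω, 1 ≤ X a ω)
    (hindep : iIndepFun X P)
    (hident : ∀ a, IdentDistrib (X a) (X 1) P P)
    (k j : ℕ) (hk : 1 ≤ k) (hj : j ≤ k)
    (p S C : ℕ → ℝ)
    (hp : ∀ l, p l = (P {ω | X 1 ω = l}).toReal)
    (hS : ∀ i, S i = (P {ω | i ≤ X 1 ω}).toReal)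
    (hC : ∀ i, C i = (P {ω | X 1 ω ≤ i}).toReal)
    (n : ℕ) (hn : k + 1 ≤ n) :
    (P {ω | ((Finset.Icc (n - k) (n - 1)).filter fun m => X n ω ≤ X m ω).card = j}).toReal
      = (k.choose j : ℝ) * ∑' i : ℕ, S (i + 1) ^ j * C i ^ (k - j) * p (i + 1) := by
  classical
  set I := Finset.Icc (n - k) (n - 1) with hIdef
  have hnI : n ∉ I := by simp only [hIdef, Finset.mem_Icc]; omega
  have hIcard : I.card = k := by simp only [hIdef, Nat.card_Icc]; omega
  have hdisc : ∀ s : Set ℕ, MeasurableSet s := fun s => trivial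
  -- the sets used for the decomposition
  set A : ℕ → Finset ℕ → ℕ → Set ℕ := fun i T m =>
    if m = n then {i + 1} else if m ∈ T then Set.Ici (i + 1) else Set.Iio (i + 1) with hA
  -- pointwise characterization of the basic events
  have hG : ∀ (i : ℕ) (T : Finset ℕ), T ⊆ I → ∀ ω : Ω,
      (ω ∈ ⋂ m ∈ insert n I, X m ⁻¹' (A i T m)) ↔
        (X n ω = i + 1 ∧ I.filter (fun m => i + 1 ≤ X m ω) = T) := by
    intro i T hTI ω
    simp only [Set.mem_iInter, Set.mem_preimage, Finset.mem_insert, hA]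
    constructor
    · intro h
      have hn' := h n (Or.inl rfl)
      rw [if_pos rfl] at hn'
      refine ⟨hn', ?_⟩
      ext m
      simp only [Finset.mem_filter]
      constructor
      · rintro ⟨hmI, hle⟩
        have hmem := h m (Or.inr hmI)
        have hmn : m ≠ n := fun e => hnI (e ▸ hmI)
        rw [if_neg hmn] at hmem
        by_contra hmT
        rw [if_neg hmT] at hmem
        exact absurd hmem (not_lt.mpr hle)
      · intro hmT
        refine ⟨hTI hmT, ?_⟩
        have hmem := h m (Or.inr (hTI hmT))
        have hmn : m ≠ n := fun e => hnI (e ▸ hTI hmT)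
        rw [if_neg hmn, if_pos hmT] at hmem
        exact hmem
    · rintro ⟨hXn, hfil⟩ m hm
      rcases hm with rfl | hmI
      · rw [if_pos rfl]; exact hXn
      · have hmn : m ≠ n := fun e => hnI (e ▸ hmI)
        rw [if_neg hmn]
        by_cases hmT : m ∈ T
        · rw [if_pos hmT]
          have : m ∈ I.filter (fun m => i + 1 ≤ X m ω) := hfil ▸ hmT
          exact (Finset.mem_filter.mp this).2
        · rw [if_neg hmT]
          by_contra hlt
          rw [Set.mem_Iio, not_lt] at hlt
          exact hmT (hfil ▸ Finset.mem_filter.mpr ⟨hmI, hlt⟩)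
  -- decomposition of the main event
  have hset : {ω | (I.filter fun m => X n ω ≤ X m ω).card = j}
      = ⋃ i : ℕ, ⋃ T ∈ I.powersetCard j, ⋂ m ∈ insert n I, X m ⁻¹' (A i T m) := by
    ext ω
    simp only [Set.mem_setOf_eq, Set.mem_iUnion]
    constructor
    · intro hcard
      refine ⟨X n ω - 1, I.filter (fun m => X n ω ≤ X m ω),
        Finset.mem_powersetCard.mpr ⟨Finset.filter_subset _ _, hcard⟩, ?_⟩
      rw [hG _ _ (Finset.filter_subset _ _)]
      have h1 : X n ω - 1 + 1 = X n ω := Nat.succ_pred_eq_of_pos (hXpos n ω)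
      rw [h1]
      exact ⟨rfl, rfl⟩
    · rintro ⟨i, T, hT, hmem⟩
      obtain ⟨hTI, hTcard⟩ := Finset.mem_powersetCard.mp hT
      rw [hG _ _ hTI] at hmem
      obtain ⟨hXn, hfil⟩ := hmem
      have : I.filter (fun m => X n ω ≤ X m ω) = I.filter (fun m => i + 1 ≤ X m ω) :=
        Finset.filter_congr (fun m _ => by rw [hXn])
      rw [this, hfil, hTcard]
  -- probability of each basic event
  have key : ∀ (i : ℕ) (T : Finset ℕ), T ⊆ I → T.card = j →
      P (⋂ m ∈ insert n I, X m ⁻¹' (A i T m))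
        = P {ω | i + 1 ≤ X 1 ω} ^ j * P {ω | X 1 ω ≤ i} ^ (k - j)
            * P {ω | X 1 ω = i + 1} := by
    intro i T hTI hTcard
    rw [hindep.measure_inter_preimage_eq_mul (insert n I) (fun m _ => hdisc _),
      Finset.prod_insert hnI]
    have hfac : ∀ m ∈ I, P (X m ⁻¹' (A i T m))
        = if m ∈ T then P {ω | i + 1 ≤ X 1 ω} else P {ω | X 1 ω ≤ i} := by
      intro m hm
      have hmn : m ≠ n := fun e => hnI (e ▸ hm)
      simp only [hA, if_neg hmn]
      by_cases hmT : m ∈ T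
      · rw [if_pos hmT, if_pos hmT, (hident m).measure_mem_eq (hdisc _)]
        rfl
      · rw [if_neg hmT, if_neg hmT, (hident m).measure_mem_eq (hdisc _)]
        congr 1
        ext ω
        simp [Nat.lt_succ_iff]
    rw [Finset.prod_congr rfl hfac, Finset.prod_ite, Finset.prod_const, Finset.prod_const,
      Finset.filter_mem_eq_inter, Finset.inter_eq_right.mpr hTI, hTcard]
    have hcard2 : (I.filter fun m => m ∉ T).card = k - j := by
      rw [Finset.filter_not, Finset.card_sdiff_of_subset (Finset.filter_subset _ _),
        Finset.filter_mem_eq_inter, Finset.inter_eq_right.mpr hTI, hIcard, hTcard]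
    rw [hcard2]
    have hXn1 : P (X n ⁻¹' A i T n) = P {ω | X 1 ω = i + 1} := by
      simp only [hA, if_pos rfl]
      exact (hident n).measure_mem_eq (hdisc _)
    rw [hXn1]
    ring
  -- measurability
  have hGmeas : ∀ (i : ℕ) (T : Finset ℕ),
      MeasurableSet (⋂ m ∈ insert n I, X m ⁻¹' (A i T m)) :=
    fun i T => MeasurableSet.biInter (Finset.countable_toSet _)
      (fun m _ => (hXmeas m) (hdisc _))
  -- measure of the decomposition
  have hmeasU : ∀ i : ℕ, MeasurableSet (⋃ T ∈ Finset.powersetCard j I,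
      ⋂ m ∈ insert n I, X m ⁻¹' (A i T m)) :=
    fun i => MeasurableSet.iUnion fun T => MeasurableSet.iUnion fun _ => hGmeas i T
  have hdisjI : Pairwise (Function.onFun Disjoint (fun i => ⋃ T ∈ Finset.powersetCard j I,
      ⋂ m ∈ insert n I, X m ⁻¹' (A i T m))) := by
    intro i i' hne
    simp only [Function.onFun]
    rw [Set.disjoint_left]
    intro ω hω hω'
    simp only [Set.mem_iUnion] at hω hω'
    obtain ⟨T, hT, hωT⟩ := hω
    obtain ⟨T', hT', hωT'⟩ := hω'
    rw [hG _ _ (Finset.mem_powersetCard.mp hT).1] at hωT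
    rw [hG _ _ (Finset.mem_powersetCard.mp hT').1] at hωT'
    have h1 := hωT.1
    have h2 := hωT'.1
    exact hne (by omega)
  have hdisjT : ∀ i : ℕ, (↑(Finset.powersetCard j I) : Set (Finset ℕ)).PairwiseDisjoint
      (fun T => ⋂ m ∈ insert n I, X m ⁻¹' (A i T m)) := by
    intro i T hT T' hT' hne
    simp only [Function.onFun]
    rw [Set.disjoint_left]
    intro ω hω hω'
    rw [hG _ _ (Finset.mem_powersetCard.mp (by exact_mod_cast hT)).1] at hω
    rw [hG _ _ (Finset.mem_powersetCard.mp (by exact_mod_cast hT')).1] at hω'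
    exact hne (hω.2 ▸ hω'.2 ▸ rfl)
  have hPE : P {ω | (I.filter fun m => X n ω ≤ X m ω).card = j}
      = ∑' i : ℕ, (k.choose j : ENNReal) *
          (P {ω | i + 1 ≤ X 1 ω} ^ j * P {ω | X 1 ω ≤ i} ^ (k - j)
            * P {ω | X 1 ω = i + 1}) := by
    rw [hset, measure_iUnion hdisjI hmeasU]
    refine tsum_congr fun i => ?_
    rw [measure_biUnion_finset (hdisjT i) (fun T _ => hGmeas i T)]
    rw [Finset.sum_congr rfl (fun T hT => key i T
        (Finset.mem_powersetCard.mp hT).1 (Finset.mem_powersetCard.mp hT).2),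
      Finset.sum_const, Finset.card_powersetCard, hIcard, nsmul_eq_mul]
  -- pass to real numbers
  have hfin : ∀ i : ℕ, (k.choose j : ENNReal) *
      (P {ω | i + 1 ≤ X 1 ω} ^ j * P {ω | X 1 ω ≤ i} ^ (k - j)
        * P {ω | X 1 ω = i + 1}) ≠ ⊤ :=
    fun i => ENNReal.mul_ne_top (ENNReal.natCast_ne_top _)
      (ENNReal.mul_ne_top (ENNReal.mul_ne_top
        (ENNReal.pow_ne_top (measure_ne_top _ _))
        (ENNReal.pow_ne_top (measure_ne_top _ _))) (measure_ne_top _ _))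
  have hterm : ∀ i : ℕ, ((k.choose j : ENNReal) *
      (P {ω | i + 1 ≤ X 1 ω} ^ j * P {ω | X 1 ω ≤ i} ^ (k - j)
        * P {ω | X 1 ω = i + 1})).toReal
      = (k.choose j : ℝ) * (S (i + 1) ^ j * C i ^ (k - j) * p (i + 1)) := by
    intro i
    rw [ENNReal.toReal_mul, ENNReal.toReal_mul, ENNReal.toReal_mul,
      ENNReal.toReal_pow, ENNReal.toReal_pow, ENNReal.toReal_natCast,
      hS (i + 1), hC i, hp (i + 1)]
  rw [hPE, ENNReal.tsum_toReal_eq hfin, tsum_congr hterm, tsum_mul_left]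
end

section
/- Let n ≥ k+1 and let i < m be positive integers. Let B be the event {X_n = i and exactly j of X_{n-k}, …, X_{n-1} are ≥ i}, and assume P(B) > 0. Then P(X_{n+1} = m, exactly j of X_{n-k+1}, …, X_n are ≥ m, and X_{n-k} < i | B) = (S_m/S_i)^j · ((k-j)/k) · p_m. -/
open MeasureTheory ProbabilityTheory

def pat {Ω : Type*} (X : ℕ → Ω → ℕ) (w : Finset ℕ) (f : ℕ → Set ℕ) : Set Ω :=
  {ω | ∀ t ∈ w, X t ω ∈ f t}

lemma natMeasurableSet (s : Set ℕ) : MeasurableSet s :=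
  MeasurableSpace.measurableSet_top

lemma pat_eq_biInter {Ω : Type*} (X : ℕ → Ω → ℕ) (w : Finset ℕ) (f : ℕ → Set ℕ) :
    pat X w f = ⋂ t ∈ w, X t ⁻¹' f t := by
  ext ω; simp [pat]

lemma pat_measurable {Ω : Type*} [MeasurableSpace Ω] (X : ℕ → Ω → ℕ)
    (hXmeas : ∀ a, Measurable (X a)) (w : Finset ℕ) (f : ℕ → Set ℕ) :
    MeasurableSet (pat X w f) := by
  rw [pat_eq_biInter]
  exact Set.Finite.measurableSet_biInter w.finite_toSet
    fun t _ => (hXmeas t) (natMeasurableSet _)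

lemma pat_prob {Ω : Type*} [MeasurableSpace Ω] (P : Measure Ω)
    (X : ℕ → Ω → ℕ)
    (hindep : iIndepFun X P)
    (hident : ∀ a, IdentDistrib (X a) (X 1) P P)
    (w : Finset ℕ) (f : ℕ → Set ℕ) :
    P (pat X w f) = ∏ t ∈ w, P (X 1 ⁻¹' f t) := by
  rw [pat_eq_biInter]
  rw [hindep.meas_biInter (fun t _ => ⟨f t, natMeasurableSet _, rfl⟩)]
  exact Finset.prod_congr rfl fun t _ => (hident t).measure_mem_eq (natMeasurableSet _)

lemma pat_inter {Ω : Type*} (X : ℕ → Ω → ℕ) (G w : Finset ℕ) (hGw : Disjoint G w)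
    (g h : ℕ → Set ℕ) :
    pat X G g ∩ pat X w h = pat X (G ∪ w) (fun t => if t ∈ G then g t else h t) := by
  ext ω
  simp only [pat, Set.mem_inter_iff, Set.mem_setOf_eq, Finset.mem_union]
  constructor
  · rintro ⟨h1, h2⟩ t ht
    rcases ht with ht | ht
    · rw [if_pos ht]; exact h1 t ht
    · rw [if_neg (Finset.disjoint_right.mp hGw ht)]; exact h2 t ht
  · intro h
    refine ⟨fun t ht => ?_, fun t ht => ?_⟩
    · have := h t (Or.inl ht); rwa [if_pos ht] at this
    · have := h t (Or.inr ht); rwa [if_neg (Finset.disjoint_right.mp hGw ht)] at this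

lemma prod_ite_const {M : Type*} [CommMonoid M] (w T : Finset ℕ) (hTw : T ⊆ w) (a b : M) :
    (∏ t ∈ w, if t ∈ T then a else b) = a ^ T.card * b ^ (w.card - T.card) := by
  rw [Finset.prod_ite, Finset.prod_const, Finset.prod_const]
  have h1 : w.filter (fun t => t ∈ T) = T := by
    rw [Finset.filter_mem_eq_inter, Finset.inter_eq_right.mpr hTw]
  rw [h1]
  congr 2
  rw [Finset.filter_not, Finset.card_sdiff_of_subset (Finset.filter_subset _ _), h1]

lemma union_pattern_prob {Ω : Type*} [MeasurableSpace Ω] (P : Measure Ω)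
    (X : ℕ → Ω → ℕ) (hXmeas : ∀ a, Measurable (X a))
    (hindep : iIndepFun X P)
    (hident : ∀ a, IdentDistrib (X a) (X 1) P P)
    (G w s : Finset ℕ) (hsw : s ⊆ w) (hGw : Disjoint G w)
    (g : ℕ → Set ℕ) (j : ℕ) (Shi Slo : Set ℕ) (hdisj : Disjoint Shi Slo) :
    P (⋃ T ∈ s.powersetCard j, (pat X G g ∩ pat X w fun t => if t ∈ T then Shi else Slo))
      = (s.card.choose j : ENNReal) * ((∏ t ∈ G, P (X 1 ⁻¹' g t)) *
          P (X 1 ⁻¹' Shi) ^ j * P (X 1 ⁻¹' Slo) ^ (w.card - j)) := by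
  classical
  have hdisjPW : Set.PairwiseDisjoint ↑(s.powersetCard j)
      (fun T : Finset ℕ => pat X G g ∩ pat X w fun t => if t ∈ T then Shi else Slo) := by
    intro T hT T' hT' hne
    simp only [Finset.mem_coe, Finset.mem_powersetCard] at hT hT'
    have hnsub : ¬ T ⊆ T' := fun hsub =>
      hne (Finset.eq_of_subset_of_card_le hsub (le_of_eq (hT'.2.trans hT.2.symm)))
    obtain ⟨t, htT, htT'⟩ := Finset.not_subset.mp hnsub
    refine Set.disjoint_left.mpr ?_
    rintro ω ⟨-, h1⟩ ⟨-, h2⟩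
    have htw : t ∈ w := hsw (hT.1 htT)
    have e1 : X t ω ∈ Shi := by simpa [htT] using h1 t htw
    have e2 : X t ω ∈ Slo := by simpa [htT'] using h2 t htw
    exact Set.disjoint_left.mp hdisj e1 e2
  rw [measure_biUnion_finset hdisjPW (fun T _ =>
    (pat_measurable X hXmeas G g).inter (pat_measurable X hXmeas w _))]
  have hterm : ∀ T ∈ s.powersetCard j,
      P (pat X G g ∩ pat X w fun t => if t ∈ T then Shi else Slo)
        = (∏ t ∈ G, P (X 1 ⁻¹' g t)) * P (X 1 ⁻¹' Shi) ^ j * P (X 1 ⁻¹' Slo) ^ (w.card - j) := by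
    intro T hT
    rw [Finset.mem_powersetCard] at hT
    rw [pat_inter X G w hGw, pat_prob P X hindep hident, Finset.prod_union hGw]
    have hG : ∀ t ∈ G, P (X 1 ⁻¹' (if t ∈ G then g t else if t ∈ T then Shi else Slo))
        = P (X 1 ⁻¹' g t) := fun t ht => by rw [if_pos ht]
    have hw : ∀ t ∈ w, P (X 1 ⁻¹' (if t ∈ G then g t else if t ∈ T then Shi else Slo))
        = (if t ∈ T then P (X 1 ⁻¹' Shi) else P (X 1 ⁻¹' Slo)) := by
      intro t ht
      rw [if_neg (Finset.disjoint_right.mp hGw ht)]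
      by_cases hT' : t ∈ T
      · rw [if_pos hT', if_pos hT']
      · rw [if_neg hT', if_neg hT']
    rw [Finset.prod_congr rfl hG, Finset.prod_congr rfl hw,
      prod_ite_const w T (hT.1.trans hsw), hT.2, mul_assoc]
  rw [Finset.sum_congr rfl hterm, Finset.sum_const, Finset.card_powersetCard, nsmul_eq_mul]

/-- Prediction step, case `m > i`, `X_{n-k} < i`. -/
theorem recent_k_record_pred_gt_low
    {Ω : Type*} [MeasurableSpace Ω] (P : Measure Ω) [IsProbabilityMeasure P]
    (X : ℕ → Ω → ℕ) (hXmeas : ∀ a, Measurable (X a))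
    (hXpos : ∀ a ω, 1 ≤ X a ω)
    (hindep : iIndepFun X P)
    (hident : ∀ a, IdentDistrib (X a) (X 1) P P)
    (k j : ℕ) (hk : 1 ≤ k) (hj : j ≤ k)
    (p S C : ℕ → ℝ)
    (hp : ∀ l, p l = (P {ω | X 1 ω = l}).toReal)
    (hS : ∀ i, S i = (P {ω | i ≤ X 1 ω}).toReal)
    (hC : ∀ i, C i = (P {ω | X 1 ω ≤ i}).toReal)
    (n : ℕ) (hn : k + 1 ≤ n)
    (i m : ℕ) (hi : 1 ≤ i) (him : i < m)
    (B : Set Ω)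
    (hB : B = {ω | X n ω = i ∧
      ((Finset.Icc (n - k) (n - 1)).filter fun t => i ≤ X t ω).card = j})
    (hBpos : 0 < P B) :
    ((P[|B]) {ω | X (n + 1) ω = m ∧
        ((Finset.Icc (n - k + 1) n).filter fun t => m ≤ X t ω).card = j ∧
        X (n - k) ω < i}).toReal
      = (S m / S i) ^ j * (((k : ℝ) - j) / k) * p m := by
  classical
  have hw1card : (Finset.Icc (n - k) (n - 1)).card = k := by
    rw [Nat.card_Icc]; omega
  have hw2card : (Finset.Icc (n - k + 1) (n - 1)).card = k - 1 := by
    rw [Nat.card_Icc]; omega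
  have hw21 : Finset.Icc (n - k + 1) (n - 1) ⊆ Finset.Icc (n - k) (n - 1) :=
    Finset.Icc_subset_Icc (by omega) le_rfl
  have hnw1 : n ∉ Finset.Icc (n - k) (n - 1) := by
    simp only [Finset.mem_Icc]; omega
  have hGw1 : Disjoint {n} (Finset.Icc (n - k) (n - 1)) :=
    Finset.disjoint_singleton_left.mpr hnw1
  have hGw2 : Disjoint ({n + 1, n} : Finset ℕ) (Finset.Icc (n - k) (n - 1)) := by
    simp only [Finset.disjoint_left, Finset.mem_insert, Finset.mem_singleton, Finset.mem_Icc]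
    rintro a (rfl | rfl) <;> omega
  have hdisj1 : Disjoint (Set.Ici i) (Set.Iio i) := (Set.Iio_disjoint_Ici le_rfl).symm
  have hdisj2 : Disjoint (Set.Ici m) (Set.Iio i) := (Set.Iio_disjoint_Ici him.le).symm
  -- decomposition of B
  have hBeq : B = ⋃ T ∈ (Finset.Icc (n - k) (n - 1)).powersetCard j,
      (pat X {n} (fun _ => ({i} : Set ℕ)) ∩
        pat X (Finset.Icc (n - k) (n - 1)) fun t => if t ∈ T then Set.Ici i else Set.Iio i) := by
    rw [hB]
    ext ω
    simp only [Set.mem_setOf_eq, Set.mem_iUnion, Set.mem_inter_iff, pat,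
      Finset.mem_powersetCard, exists_prop]
    constructor
    · rintro ⟨hXn, hcard⟩
      refine ⟨(Finset.Icc (n - k) (n - 1)).filter (fun t => i ≤ X t ω),
        ⟨Finset.filter_subset _ _, hcard⟩, ?_, ?_⟩
      · intro t ht
        have : t = n := Finset.mem_singleton.mp ht
        subst this
        simpa using hXn
      · intro t ht
        by_cases hT : t ∈ (Finset.Icc (n - k) (n - 1)).filter (fun t => i ≤ X t ω)
        · rw [if_pos hT]
          exact Set.mem_Ici.mpr (Finset.mem_filter.mp hT).2
        · rw [if_neg hT]
          refine Set.mem_Iio.mpr ?_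
          by_contra hle
          push_neg at hle
          exact hT (Finset.mem_filter.mpr ⟨ht, hle⟩)
    · rintro ⟨T, ⟨hTsub, hTcard⟩, hG, hpat⟩
      have hXn : X n ω = i := by simpa using hG n (Finset.mem_singleton_self n)
      refine ⟨hXn, ?_⟩
      have hfe : (Finset.Icc (n - k) (n - 1)).filter (fun t => i ≤ X t ω) = T := by
        ext t
        simp only [Finset.mem_filter]
        constructor
        · rintro ⟨htw, hle⟩
          by_contra hT
          have h2 := hpat t htw
          rw [if_neg hT] at h2
          exact absurd hle (not_le.mpr (Set.mem_Iio.mp h2))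
        · intro hT
          have htw := hTsub hT
          have h2 := hpat t htw
          rw [if_pos hT] at h2
          exact ⟨htw, Set.mem_Ici.mp h2⟩
      rw [hfe]
      exact hTcard
  -- decomposition of B ∩ A
  have hABeq : B ∩ {ω | X (n + 1) ω = m ∧
        ((Finset.Icc (n - k + 1) n).filter fun t => m ≤ X t ω).card = j ∧
        X (n - k) ω < i}
      = ⋃ T ∈ (Finset.Icc (n - k + 1) (n - 1)).powersetCard j,
      (pat X {n + 1, n} (fun t => if t = n + 1 then ({m} : Set ℕ) else {i}) ∩
        pat X (Finset.Icc (n - k) (n - 1)) fun t => if t ∈ T then Set.Ici m else Set.Iio i) := by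
    rw [hB]
    ext ω
    simp only [Set.mem_inter_iff, Set.mem_setOf_eq, Set.mem_iUnion, pat,
      Finset.mem_powersetCard, exists_prop]
    constructor
    · rintro ⟨⟨hXn, hc1⟩, hXm, hc2, hlow⟩
      set T1 := (Finset.Icc (n - k) (n - 1)).filter (fun t => i ≤ X t ω) with hT1
      set T2 := (Finset.Icc (n - k + 1) n).filter (fun t => m ≤ X t ω) with hT2
      have hT2T1 : T2 ⊆ T1 := by
        intro t ht
        rw [hT2, Finset.mem_filter, Finset.mem_Icc] at ht
        obtain ⟨⟨h1, h2⟩, h3⟩ := ht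
        have htn : t ≠ n := by
          rintro rfl
          rw [hXn] at h3
          omega
        rw [hT1, Finset.mem_filter, Finset.mem_Icc]
        exact ⟨⟨by omega, by omega⟩, by omega⟩
      have hT12 : T2 = T1 := Finset.eq_of_subset_of_card_le hT2T1 (le_of_eq (hc1.trans hc2.symm))
      refine ⟨T1, ⟨?_, hc1⟩, ?_, ?_⟩
      · intro t ht
        rw [hT1, Finset.mem_filter, Finset.mem_Icc] at ht
        obtain ⟨⟨h1, h2⟩, h3⟩ := ht
        have htnk : t ≠ n - k := by
          rintro rfl
          omega
        rw [Finset.mem_Icc]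
        omega
      · intro t ht
        rcases Finset.mem_insert.mp ht with rfl | ht
        · rw [if_pos rfl]
          simpa using hXm
        · have : t = n := Finset.mem_singleton.mp ht
          subst this
          rw [if_neg (by omega)]
          simpa using hXn
      · intro t ht
        by_cases hT : t ∈ T1
        · rw [if_pos hT]
          have h4 : t ∈ T2 := hT12 ▸ hT
          rw [hT2, Finset.mem_filter] at h4
          exact Set.mem_Ici.mpr h4.2
        · rw [if_neg hT]
          refine Set.mem_Iio.mpr ?_
          by_contra hle
          push_neg at hle
          exact hT (by rw [hT1, Finset.mem_filter]; exact ⟨ht, hle⟩)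
    · rintro ⟨T, ⟨hTsub, hTcard⟩, hG, hpat⟩
      have hXm : X (n + 1) ω = m := by
        simpa using hG (n + 1) (Finset.mem_insert_self _ _)
      have hXn : X n ω = i := by
        have h1 := hG n (by simp)
        rw [if_neg (show ¬ n = n + 1 by omega)] at h1
        simpa using h1
      have hnkT : n - k ∉ T := fun h => by
        have := Finset.mem_Icc.mp (hTsub h)
        omega
      have hnkw1 : n - k ∈ Finset.Icc (n - k) (n - 1) := Finset.mem_Icc.mpr ⟨le_rfl, by omega⟩
      have hlow : X (n - k) ω < i := by
        have h1 := hpat (n - k) hnkw1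
        rw [if_neg hnkT] at h1
        exact Set.mem_Iio.mp h1
      have hfe1 : (Finset.Icc (n - k) (n - 1)).filter (fun t => i ≤ X t ω) = T := by
        ext t
        simp only [Finset.mem_filter]
        constructor
        · rintro ⟨htw, hle⟩
          by_contra hT
          have h2 := hpat t htw
          rw [if_neg hT] at h2
          exact absurd hle (not_le.mpr (Set.mem_Iio.mp h2))
        · intro hT
          have htw : t ∈ Finset.Icc (n - k) (n - 1) := hw21 (hTsub hT)
          have h2 := hpat t htw
          rw [if_pos hT] at h2
          exact ⟨htw, le_trans him.le (Set.mem_Ici.mp h2)⟩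
      have hfe2 : (Finset.Icc (n - k + 1) n).filter (fun t => m ≤ X t ω) = T := by
        ext t
        simp only [Finset.mem_filter, Finset.mem_Icc]
        constructor
        · rintro ⟨⟨h1, h2⟩, h3⟩
          have htn : t ≠ n := by
            rintro rfl
            rw [hXn] at h3
            omega
          have htw : t ∈ Finset.Icc (n - k) (n - 1) := Finset.mem_Icc.mpr ⟨by omega, by omega⟩
          by_contra hT
          have h4 := hpat t htw
          rw [if_neg hT] at h4
          have h5 : X t ω < i := Set.mem_Iio.mp h4
          omega
        · intro hT
          have ht2 := Finset.mem_Icc.mp (hTsub hT)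
          have htw : t ∈ Finset.Icc (n - k) (n - 1) := Finset.mem_Icc.mpr ⟨by omega, by omega⟩
          have h2 := hpat t htw
          rw [if_pos hT] at h2
          exact ⟨⟨by omega, by omega⟩, Set.mem_Ici.mp h2⟩
      exact ⟨⟨hXn, by rw [hfe1]; exact hTcard⟩, hXm, by rw [hfe2]; exact hTcard, hlow⟩
  have hPB : P B = ((k.choose j : ℕ) : ENNReal) *
      (P (X 1 ⁻¹' {i}) * P (X 1 ⁻¹' Set.Ici i) ^ j * P (X 1 ⁻¹' Set.Iio i) ^ (k - j)) := by
    rw [hBeq, union_pattern_prob P X hXmeas hindep hident {n} _ _ (subset_refl _) hGw1 _ j _ _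
      hdisj1, hw1card, Finset.prod_singleton]
  have hPAB : P (B ∩ {ω | X (n + 1) ω = m ∧
        ((Finset.Icc (n - k + 1) n).filter fun t => m ≤ X t ω).card = j ∧
        X (n - k) ω < i}) = (((k - 1).choose j : ℕ) : ENNReal) *
      (P (X 1 ⁻¹' {m}) * P (X 1 ⁻¹' {i}) * P (X 1 ⁻¹' Set.Ici m) ^ j *
        P (X 1 ⁻¹' Set.Iio i) ^ (k - j)) := by
    rw [hABeq, union_pattern_prob P X hXmeas hindep hident {n + 1, n} _ _ hw21 hGw2 _ j _ _
      hdisj2, hw1card, hw2card]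
    have hprod : (∏ t ∈ ({n + 1, n} : Finset ℕ),
        P (X 1 ⁻¹' (if t = n + 1 then ({m} : Set ℕ) else {i})))
        = P (X 1 ⁻¹' {m}) * P (X 1 ⁻¹' {i}) := by
      rw [Finset.prod_insert (Finset.notMem_singleton.mpr (by omega)),
        Finset.prod_singleton, if_pos rfl, if_neg (show ¬ n = n + 1 by omega)]
    rw [hprod]
  have hBmeas : MeasurableSet B := by
    rw [hBeq]
    exact Finset.measurableSet_biUnion _ fun T _ =>
      (pat_measurable X hXmeas _ _).inter (pat_measurable X hXmeas _ _)
  rw [ProbabilityTheory.cond_apply hBmeas, ENNReal.toReal_mul, ENNReal.toReal_inv, hPB, hPAB]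
  -- nonvanishing facts
  have hne := hBpos.ne'
  rw [hPB, mul_ne_zero_iff, mul_ne_zero_iff, mul_ne_zero_iff] at hne
  obtain ⟨-, ⟨hpine, -⟩, hCine⟩ := hne
  have hpiSi : P (X 1 ⁻¹' {i}) ≤ P (X 1 ⁻¹' Set.Ici i) :=
    measure_mono (Set.preimage_mono (by simp))
  have hSine : P (X 1 ⁻¹' Set.Ici i) ≠ 0 :=
    fun h => hpine (le_zero_iff.mp (h ▸ hpiSi))
  -- convert to real numbers
  rw [hp, hS, hS]
  have hsm : {ω | X 1 ω = m} = X 1 ⁻¹' {m} := rfl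
  have hsi : {ω | m ≤ X 1 ω} = X 1 ⁻¹' Set.Ici m := rfl
  have hsi2 : {ω | i ≤ X 1 ω} = X 1 ⁻¹' Set.Ici i := rfl
  rw [hsm, hsi, hsi2]
  simp only [ENNReal.toReal_mul, ENNReal.toReal_pow, ENNReal.toReal_natCast]
  set pir := (P (X 1 ⁻¹' ({i} : Set ℕ))).toReal with hpir_def
  set pmr := (P (X 1 ⁻¹' ({m} : Set ℕ))).toReal with hpmr_def
  set sir := (P (X 1 ⁻¹' Set.Ici i)).toReal with hsir_def
  set smr := (P (X 1 ⁻¹' Set.Ici m)).toReal with hsmr_def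
  set cir := (P (X 1 ⁻¹' Set.Iio i)).toReal with hcir_def
  have hpir : 0 < pir := ENNReal.toReal_pos hpine (measure_ne_top P _)
  have hsir : 0 < sir := ENNReal.toReal_pos hSine (measure_ne_top P _)
  have hcie : 0 < cir ^ (k - j) := by
    rw [hcir_def, ← ENNReal.toReal_pow]
    exact ENNReal.toReal_pos hCine (ENNReal.pow_ne_top (measure_ne_top P _))
  have hkpos : (0 : ℝ) < k := by exact_mod_cast hk
  have hCkj : (0 : ℝ) < k.choose j := by exact_mod_cast Nat.choose_pos hj
  have hid : (((k - 1).choose j : ℕ) : ℝ) * k = ((k.choose j : ℕ) : ℝ) * ((k : ℝ) - j) := by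
    have h := Nat.choose_mul_succ_eq (k - 1) j
    rw [show k - 1 + 1 = k by omega] at h
    rw [← Nat.cast_sub hj]
    exact_mod_cast h
  rw [div_pow]
  field_simp
  linear_combination (pmr * smr ^ j) * hid
end

section
/- Let n ≥ k+1 and let m < i be positive integers. Let B be the event {X_n = i and exactly j of X_{n-k}, …, X_{n-1} are ≥ i}, and assume P(B) > 0. Then P(X_{n+1} = m, exactly j of X_{n-k+1}, …, X_n are ≥ m, and X_{n-k} ≥ i | B) = (C_{m-1}/C_{i-1})^{k-j} · (j/k) · p_m. -/
open MeasureTheory ProbabilityTheory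

lemma aux_preim_prod {Ω : Type*} [MeasurableSpace Ω] {P : Measure Ω}
    {X : ℕ → Ω → ℕ}
    (hindep : iIndepFun X P)
    (hident : ∀ a, IdentDistrib (X a) (X 1) P P)
    (u : Finset ℕ) (A : ℕ → Set ℕ) :
    P (⋂ t ∈ u, X t ⁻¹' A t) = ∏ t ∈ u, P (X 1 ⁻¹' A t) := by
  rw [iIndepFun_iff_measure_inter_preimage_eq_mul.mp hindep u
    (fun t _ => MeasurableSet.of_discrete)]
  exact Finset.prod_congr rfl fun t _ => (hident t).measure_mem_eq MeasurableSet.of_discrete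

lemma aux_prod_split {M : Type*} [CommMonoid M] (s T : Finset ℕ) (hT : T ⊆ s)
    (g : ℕ → M) (x y : M) (hx : ∀ t ∈ T, g t = x) (hy : ∀ t ∈ s \ T, g t = y) :
    ∏ t ∈ s, g t = x ^ T.card * y ^ (s.card - T.card) := by
  have h : ∏ t ∈ s, g t = ∏ t ∈ T ∪ (s \ T), g t := by
    rw [Finset.union_sdiff_of_subset hT]
  rw [h, Finset.prod_union Finset.disjoint_sdiff, Finset.prod_congr rfl hx,
    Finset.prod_congr rfl hy, Finset.prod_const, Finset.prod_const, Finset.card_sdiff_of_subset hT]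

/-- Prediction step, case `m < i`, `X_{n-k} ≥ i`. -/
theorem recent_k_record_pred_lt_high
    {Ω : Type*} [MeasurableSpace Ω] (P : Measure Ω) [IsProbabilityMeasure P]
    (X : ℕ → Ω → ℕ) (hXmeas : ∀ a, Measurable (X a))
    (hXpos : ∀ a ω, 1 ≤ X a ω)
    (hindep : iIndepFun X P)
    (hident : ∀ a, IdentDistrib (X a) (X 1) P P)
    (k j : ℕ) (hk : 1 ≤ k) (hj : j ≤ k)
    (p S C : ℕ → ℝ)
    (hp : ∀ l, p l = (P {ω | X 1 ω = l}).toReal)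
    (hS : ∀ i, S i = (P {ω | i ≤ X 1 ω}).toReal)
    (hC : ∀ i, C i = (P {ω | X 1 ω ≤ i}).toReal)
    (n : ℕ) (hn : k + 1 ≤ n)
    (m i : ℕ) (hm : 1 ≤ m) (hmi : m < i)
    (B : Set Ω)
    (hB : B = {ω | X n ω = i ∧
      ((Finset.Icc (n - k) (n - 1)).filter fun t => i ≤ X t ω).card = j})
    (hBpos : 0 < P B) :
    ((P[|B]) {ω | X (n + 1) ω = m ∧
        ((Finset.Icc (n - k + 1) n).filter fun t => m ≤ X t ω).card = j ∧
        i ≤ X (n - k) ω}).toReal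
      = (C (m - 1) / C (i - 1)) ^ (k - j) * ((j : ℝ) / k) * p m := by
  have hi1 : 1 ≤ i := by omega
  set W : Set Ω := {ω | X (n + 1) ω = m ∧
      ((Finset.Icc (n - k + 1) n).filter fun t => m ≤ X t ω).card = j ∧
      i ≤ X (n - k) ω} with hW
  set r : Finset ℕ := Finset.Icc (n - k) (n - 1) with hr
  set s : Finset ℕ := Finset.Icc (n - k + 1) (n - 1) with hsdef
  have hmem_r : ∀ t, t ∈ r ↔ n - k ≤ t ∧ t ≤ n - 1 := fun t => Finset.mem_Icc
  have hmem_s : ∀ t, t ∈ s ↔ n - k + 1 ≤ t ∧ t ≤ n - 1 := fun t => Finset.mem_Icc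
  have hnr : n ∉ r := by rw [hmem_r]; omega
  have hnsmem : n ∉ s := by rw [hmem_s]; omega
  have hnks : n - k ∉ s := by rw [hmem_s]; omega
  have hns : ∀ t ∈ s, t ≠ n + 1 ∧ t ≠ n ∧ t ≠ n - k := by
    intro t ht; rw [hmem_s] at ht; omega
  have hcard_r : r.card = k := by rw [hr, Nat.card_Icc]; omega
  have hcard_s : s.card = k - 1 := by rw [hsdef, Nat.card_Icc]; omega
  have hrs : r = insert (n - k) s := by
    ext t; simp only [hr, hsdef, Finset.mem_Icc, Finset.mem_insert]; omega
  have hIccs : Finset.Icc (n - k + 1) n = insert n s := by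
    ext t; simp only [hsdef, Finset.mem_Icc, Finset.mem_insert]; omega
  set a := P (X 1 ⁻¹' {i}) with ha
  set b := P (X 1 ⁻¹' Set.Ici i) with hbdef
  set c := P (X 1 ⁻¹' Set.Iic (i - 1)) with hcdef
  set d := P (X 1 ⁻¹' {m}) with hddef
  set e := P (X 1 ⁻¹' Set.Iic (m - 1)) with hedef
  set AB : Finset ℕ → ℕ → Set ℕ := fun T t =>
    if t = n then {i} else if t ∈ T then Set.Ici i else Set.Iic (i - 1) with hAB
  -- decomposition of B
  have hBdec : B = ⋃ T ∈ r.powersetCard j, ⋂ t ∈ insert n r, X t ⁻¹' AB T t := by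
    rw [hB]
    ext ω
    simp only [Set.mem_setOf_eq, Set.mem_iUnion, Finset.mem_powersetCard, Set.mem_iInter,
      Set.mem_preimage, Finset.mem_insert, exists_prop]
    constructor
    · rintro ⟨hXn, hcard⟩
      refine ⟨r.filter fun t => i ≤ X t ω, ⟨Finset.filter_subset _ _, hcard⟩, ?_⟩
      intro t ht
      rcases ht with rfl | htr
      · simp [hAB, hXn]
      · have htn : t ≠ n := fun h => hnr (h ▸ htr)
        by_cases hti : i ≤ X t ω
        · simp [hAB, htn, Finset.mem_filter, htr, hti]
        · simp only [hAB, if_neg htn, Finset.mem_filter, htr, true_and, if_neg hti,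
            Set.mem_Iic]
          omega
    · rintro ⟨T, ⟨hTr, hTcard⟩, hcond⟩
      have hXn : X n ω = i := by
        have := hcond n (Or.inl rfl)
        simpa [hAB] using this
      refine ⟨hXn, ?_⟩
      have hfilter : r.filter (fun t => i ≤ X t ω) = T := by
        ext t
        simp only [Finset.mem_filter]
        constructor
        · rintro ⟨htr, hti⟩
          by_contra htT
          have h2 := hcond t (Or.inr htr)
          have htn : t ≠ n := fun h => hnr (h ▸ htr)
          simp only [hAB, if_neg htn, if_neg htT, Set.mem_Iic] at h2
          omega
        · intro htT
          have htr := hTr htT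
          have htn : t ≠ n := fun h => hnr (h ▸ htr)
          have h2 := hcond t (Or.inr htr)
          simp only [hAB, if_neg htn, if_pos htT, Set.mem_Ici] at h2
          exact ⟨htr, h2⟩
      rw [hfilter]; exact hTcard
  have hpiecemeas : ∀ (u : Finset ℕ) (A : ℕ → Set ℕ),
      MeasurableSet (⋂ t ∈ u, X t ⁻¹' A t) :=
    fun u A => MeasurableSet.biInter (Set.to_countable _)
      (fun t _ => (hXmeas t) MeasurableSet.of_discrete)
  have hBmeas : MeasurableSet B := by
    rw [hBdec]; exact (r.powersetCard j).measurableSet_biUnion (fun T _ => hpiecemeas _ _)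
  -- disjointness for B pieces
  have hdisjB : (↑(r.powersetCard j) : Set (Finset ℕ)).PairwiseDisjoint
      (fun T => ⋂ t ∈ insert n r, X t ⁻¹' AB T t) := by
    intro T1 h1 T2 h2 hne
    rw [Finset.mem_coe, Finset.mem_powersetCard] at h1 h2
    have key : ∀ (T T' : Finset ℕ), T ⊆ r → ∀ t, t ∈ T → t ∉ T' → ∀ ω,
        ω ∈ (⋂ t ∈ insert n r, X t ⁻¹' AB T t) →
        ω ∈ (⋂ t ∈ insert n r, X t ⁻¹' AB T' t) → False := by
      intro T T' hTr t htT htT' ω hω1 hω2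
      have htr := hTr htT
      have htn : t ≠ n := fun h => hnr (h ▸ htr)
      simp only [Set.mem_iInter, Set.mem_preimage, Finset.mem_insert] at hω1 hω2
      have e1 := hω1 t (Or.inr htr)
      have e2 := hω2 t (Or.inr htr)
      simp only [hAB, if_neg htn, if_pos htT, Set.mem_Ici] at e1
      simp only [hAB, if_neg htn, if_neg htT', Set.mem_Iic] at e2
      omega
    obtain ⟨t, ht⟩ : ∃ t, (t ∈ T1 ∧ t ∉ T2) ∨ (t ∈ T2 ∧ t ∉ T1) := by
      by_contra hcon
      push_neg at hcon
      exact hne (Finset.ext fun t => ⟨fun h => by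
        rcases (hcon t).1 h with h'; exact h', fun h => by
        rcases (hcon t).2 h with h'; exact h'⟩)
    refine Set.disjoint_left.mpr fun ω hω1 hω2 => ?_
    rcases ht with ⟨htT1, htT2⟩ | ⟨htT2, htT1⟩
    · exact key T1 T2 h1.1 t htT1 htT2 ω hω1 hω2
    · exact key T2 T1 h2.1 t htT2 htT1 ω hω2 hω1
  -- measure of each B piece
  have hpieceB : ∀ T ∈ r.powersetCard j,
      P (⋂ t ∈ insert n r, X t ⁻¹' AB T t) = a * (b ^ j * c ^ (k - j)) := by
    intro T hT
    rw [Finset.mem_powersetCard] at hT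
    rw [aux_preim_prod hindep hident, Finset.prod_insert hnr]
    have f0 : P (X 1 ⁻¹' AB T n) = a := by simp [hAB, ha]
    have f1 : ∏ t ∈ r, P (X 1 ⁻¹' AB T t) = b ^ T.card * c ^ (r.card - T.card) := by
      refine aux_prod_split r T hT.1 _ b c ?_ ?_
      · intro t ht
        have htn : t ≠ n := fun h => hnr (h ▸ hT.1 ht)
        simp [hAB, htn, ht, hbdef]
      · intro t ht
        rw [Finset.mem_sdiff] at ht
        have htn : t ≠ n := fun h => hnr (h ▸ ht.1)
        simp [hAB, htn, ht.2, hcdef]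
    rw [f0, f1, hT.2, hcard_r]
  have hPB : P B = (k.choose j) * (a * (b ^ j * c ^ (k - j))) := by
    rw [hBdec, measure_biUnion_finset hdisjB (fun T _ => hpiecemeas _ _),
      Finset.sum_congr rfl hpieceB, Finset.sum_const, Finset.card_powersetCard, hcard_r,
      nsmul_eq_mul]
  rw [cond_apply hBmeas P]
  rcases Nat.eq_zero_or_pos j with hj0 | hj1
  · -- j = 0 : B ∩ W = ∅
    have hemp : B ∩ W = ∅ := by
      apply Set.eq_empty_iff_forall_notMem.mpr
      intro ω hω
      obtain ⟨hωB, hωW⟩ := hω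
      rw [hB] at hωB
      obtain ⟨hXn, hcard⟩ := hωB
      obtain ⟨-, -, hik⟩ : X (n + 1) ω = m ∧
          ((Finset.Icc (n - k + 1) n).filter fun t => m ≤ X t ω).card = j ∧
          i ≤ X (n - k) ω := hωW
      have hnkr : n - k ∈ r := by rw [hmem_r]; omega
      have hmemf : n - k ∈ r.filter fun t => i ≤ X t ω := Finset.mem_filter.mpr ⟨hnkr, hik⟩
      rw [Finset.card_eq_zero.mp (hcard.trans hj0)] at hmemf
      exact Finset.notMem_empty _ hmemf
    rw [hemp, measure_empty, mul_zero, ENNReal.toReal_zero, hj0]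
    simp
  -- now j ≥ 1
  set AA : Finset ℕ → ℕ → Set ℕ := fun T t =>
    if t = n + 1 then {m} else if t = n then {i} else if t = n - k then Set.Ici i
    else if t ∈ T then Set.Ici i else Set.Iic (m - 1) with hAA
  have hn1mem : n + 1 ∉ insert n (insert (n - k) s) := by
    simp only [Finset.mem_insert, not_or]
    refine ⟨by omega, by omega, ?_⟩
    rw [hmem_s]; omega
  have hn2mem : n ∉ insert (n - k) s := by
    simp only [Finset.mem_insert, not_or]
    exact ⟨by omega, hnsmem⟩
  have hABdec : B ∩ W = ⋃ T ∈ s.powersetCard (j - 1),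
      ⋂ t ∈ insert (n + 1) (insert n (insert (n - k) s)), X t ⁻¹' AA T t := by
    ext ω
    simp only [hB, hW, Set.mem_inter_iff, Set.mem_setOf_eq, Set.mem_iUnion,
      Finset.mem_powersetCard, Set.mem_iInter, Set.mem_preimage, Finset.mem_insert, exists_prop]
    constructor
    · rintro ⟨⟨hXn, hcr⟩, hXn1, hcm, hik⟩
      set T := s.filter fun t => i ≤ X t ω with hTdef
      have hTs : T ⊆ s := Finset.filter_subset _ _
      have hTcard : T.card = j - 1 := by
        have h1 : r.filter (fun t => i ≤ X t ω) = insert (n - k) T := by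
          rw [hrs, Finset.filter_insert, if_pos hik]
        have h2 : (insert (n - k) T).card = T.card + 1 :=
          Finset.card_insert_of_notMem (fun h => hnks (hTs h))
        rw [h1, h2] at hcr
        omega
      have hmn : m ≤ X n ω := by omega
      have hM : (insert n s).filter (fun t => m ≤ X t ω)
          = insert n (s.filter fun t => m ≤ X t ω) := by
        rw [Finset.filter_insert, if_pos hmn]
      have hMcard : (s.filter fun t => m ≤ X t ω).card = j - 1 := by
        rw [hIccs, hM] at hcm
        have h3 : (insert n (s.filter fun t => m ≤ X t ω)).card
            = (s.filter fun t => m ≤ X t ω).card + 1 :=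
          Finset.card_insert_of_notMem
            (fun h => hnsmem (Finset.filter_subset _ _ h))
        rw [h3] at hcm
        omega
      have hTM : T = s.filter fun t => m ≤ X t ω := by
        apply Finset.eq_of_subset_of_card_le
        · intro t ht
          rw [hTdef, Finset.mem_filter] at ht
          exact Finset.mem_filter.mpr ⟨ht.1, by omega⟩
        · rw [hMcard, hTcard]
      refine ⟨T, ⟨hTs, hTcard⟩, ?_⟩
      intro t ht
      rcases ht with h | h | h | hts
      · rw [h]; simp [hAA, hXn1]
      · rw [h]
        simp only [hAA, if_neg (show n ≠ n + 1 by omega), if_pos rfl, Set.mem_singleton_iff]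
        exact hXn
      · rw [h]
        simp only [hAA, if_neg (show n - k ≠ n + 1 by omega),
          if_neg (show n - k ≠ n by omega), if_pos rfl, Set.mem_Ici]
        exact hik
      · obtain ⟨h1, h2, h3⟩ := hns t hts
        by_cases htT : t ∈ T
        · have hti : i ≤ X t ω := (Finset.mem_filter.mp htT).2
          simp only [hAA, if_neg h1, if_neg h2, if_neg h3, if_pos htT, Set.mem_Ici]
          exact hti
        · have hmt : ¬ m ≤ X t ω := by
            intro hmt
            exact htT (hTM ▸ Finset.mem_filter.mpr ⟨hts, hmt⟩)
          simp only [hAA, if_neg h1, if_neg h2, if_neg h3, if_neg htT, Set.mem_Iic]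
          omega
    · rintro ⟨T, ⟨hTs, hTcard⟩, hcond⟩
      have e1 : X (n + 1) ω = m := by
        have := hcond (n + 1) (Or.inl rfl)
        simpa [hAA] using this
      have e2 : X n ω = i := by
        have := hcond n (Or.inr (Or.inl rfl))
        simpa [hAA, show n ≠ n + 1 by omega] using this
      have e3 : i ≤ X (n - k) ω := by
        have := hcond (n - k) (Or.inr (Or.inr (Or.inl rfl)))
        simpa [hAA, show n - k ≠ n + 1 by omega, show n - k ≠ n by omega] using this
      have eT : ∀ t ∈ T, i ≤ X t ω := by
        intro t ht
        have hts := hTs ht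
        obtain ⟨h1, h2, h3⟩ := hns t hts
        have := hcond t (Or.inr (Or.inr (Or.inr hts)))
        simpa [hAA, h1, h2, h3, ht] using this
      have eST : ∀ t ∈ s, t ∉ T → X t ω ≤ m - 1 := by
        intro t hts htT
        obtain ⟨h1, h2, h3⟩ := hns t hts
        have := hcond t (Or.inr (Or.inr (Or.inr hts)))
        simpa [hAA, h1, h2, h3, htT] using this
      have hsfilter : s.filter (fun t => i ≤ X t ω) = T := by
        ext t
        rw [Finset.mem_filter]
        constructor
        · rintro ⟨hts, hti⟩
          by_contra htT
          have := eST t hts htT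
          omega
        · intro ht
          exact ⟨hTs ht, eT t ht⟩
      have hsfilterm : s.filter (fun t => m ≤ X t ω) = T := by
        ext t
        rw [Finset.mem_filter]
        constructor
        · rintro ⟨hts, hti⟩
          by_contra htT
          have := eST t hts htT
          omega
        · intro ht
          exact ⟨hTs ht, by have := eT t ht; omega⟩
      refine ⟨⟨e2, ?_⟩, e1, ?_, e3⟩
      · rw [hrs, Finset.filter_insert, if_pos e3, hsfilter,
          Finset.card_insert_of_notMem (fun h => hnks (hTs h))]
        omega
      · rw [hIccs, Finset.filter_insert, if_pos (show m ≤ X n ω by omega), hsfilterm,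
          Finset.card_insert_of_notMem (fun h => hnsmem (hTs h))]
        omega
  -- disjointness for A pieces
  have hdisjA : (↑(s.powersetCard (j - 1)) : Set (Finset ℕ)).PairwiseDisjoint
      (fun T => ⋂ t ∈ insert (n + 1) (insert n (insert (n - k) s)), X t ⁻¹' AA T t) := by
    intro T1 h1 T2 h2 hne
    rw [Finset.mem_coe, Finset.mem_powersetCard] at h1 h2
    have key : ∀ (T T' : Finset ℕ), T ⊆ s → ∀ t, t ∈ T → t ∉ T' → ∀ ω,
        ω ∈ (⋂ t ∈ insert (n + 1) (insert n (insert (n - k) s)), X t ⁻¹' AA T t) →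
        ω ∈ (⋂ t ∈ insert (n + 1) (insert n (insert (n - k) s)), X t ⁻¹' AA T' t) →
        False := by
      intro T T' hTr t htT htT' ω hω1 hω2
      have hts := hTr htT
      obtain ⟨h1', h2', h3'⟩ := hns t hts
      simp only [Set.mem_iInter, Set.mem_preimage, Finset.mem_insert] at hω1 hω2
      have e1 := hω1 t (Or.inr (Or.inr (Or.inr hts)))
      have e2 := hω2 t (Or.inr (Or.inr (Or.inr hts)))
      simp only [hAA, if_neg h1', if_neg h2', if_neg h3', if_pos htT, Set.mem_Ici] at e1
      simp only [hAA, if_neg h1', if_neg h2', if_neg h3', if_neg htT', Set.mem_Iic] at e2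
      omega
    obtain ⟨t, ht⟩ : ∃ t, (t ∈ T1 ∧ t ∉ T2) ∨ (t ∈ T2 ∧ t ∉ T1) := by
      by_contra hcon
      push_neg at hcon
      exact hne (Finset.ext fun t => ⟨fun h => (hcon t).1 h, fun h => (hcon t).2 h⟩)
    refine Set.disjoint_left.mpr fun ω hω1 hω2 => ?_
    rcases ht with ⟨htT1, htT2⟩ | ⟨htT2, htT1⟩
    · exact key T1 T2 h1.1 t htT1 htT2 ω hω1 hω2
    · exact key T2 T1 h2.1 t htT2 htT1 ω hω2 hω1
  -- measure of each A piece
  have hpieceA : ∀ T ∈ s.powersetCard (j - 1),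
      P (⋂ t ∈ insert (n + 1) (insert n (insert (n - k) s)), X t ⁻¹' AA T t)
        = d * (a * (b * (b ^ (j - 1) * e ^ (k - j)))) := by
    intro T hT
    rw [Finset.mem_powersetCard] at hT
    rw [aux_preim_prod hindep hident, Finset.prod_insert hn1mem, Finset.prod_insert hn2mem,
      Finset.prod_insert hnks]
    have f0 : P (X 1 ⁻¹' AA T (n + 1)) = d := by simp [hAA, hddef]
    have f1 : P (X 1 ⁻¹' AA T n) = a := by
      simp [hAA, show n ≠ n + 1 by omega, ha]
    have f2 : P (X 1 ⁻¹' AA T (n - k)) = b := by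
      simp [hAA, show n - k ≠ n + 1 by omega, show n - k ≠ n by omega, hbdef]
    have f3 : ∏ t ∈ s, P (X 1 ⁻¹' AA T t) = b ^ (j - 1) * e ^ (k - j) := by
      have h := aux_prod_split s T hT.1 (fun t => P (X 1 ⁻¹' AA T t)) b e ?_ ?_
      · rw [h, hT.2, hcard_s, show k - 1 - (j - 1) = k - j by omega]
      · intro t ht
        obtain ⟨h1, h2, h3⟩ := hns t (hT.1 ht)
        simp [hAA, h1, h2, h3, ht, hbdef]
      · intro t ht
        rw [Finset.mem_sdiff] at ht
        obtain ⟨h1, h2, h3⟩ := hns t ht.1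
        simp [hAA, h1, h2, h3, ht.2, hedef]
    rw [f0, f1, f2, f3]
  have hPA : P (B ∩ W) = ((k - 1).choose (j - 1))
      * (d * (a * (b * (b ^ (j - 1) * e ^ (k - j))))) := by
    rw [hABdec, measure_biUnion_finset hdisjA (fun T _ => hpiecemeas _ _),
      Finset.sum_congr rfl hpieceA, Finset.sum_const, Finset.card_powersetCard, hcard_s,
      nsmul_eq_mul]
  -- real algebra
  have hPBr : (P B).toReal = (k.choose j : ℝ)
      * (a.toReal * (b.toReal ^ j * c.toReal ^ (k - j))) := by
    rw [hPB]
    simp [ENNReal.toReal_mul, ENNReal.toReal_pow]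
  have hPAr : (P (B ∩ W)).toReal = ((k - 1).choose (j - 1) : ℝ)
      * (d.toReal * (a.toReal * (b.toReal * (b.toReal ^ (j - 1) * e.toReal ^ (k - j))))) := by
    rw [hPA]
    simp [ENNReal.toReal_mul, ENNReal.toReal_pow]
  have hCm : C (m - 1) = e.toReal := by rw [hC]; rfl
  have hCi : C (i - 1) = c.toReal := by rw [hC]; rfl
  have hpm : p m = d.toReal := by rw [hp]; rfl
  have hPBpos : (0 : ℝ) < (P B).toReal :=
    ENNReal.toReal_pos hBpos.ne' (measure_ne_top P B)
  have hne : (k.choose j : ℝ) * (a.toReal * (b.toReal ^ j * c.toReal ^ (k - j))) ≠ 0 := by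
    rw [← hPBr]; exact hPBpos.ne'
  have hK0 : (k.choose j : ℝ) ≠ 0 := fun h => hne (by rw [h]; ring)
  have ha0 : a.toReal ≠ 0 := fun h => hne (by rw [h]; ring)
  have hb0 : b.toReal ^ j ≠ 0 := fun h => hne (by rw [h]; ring)
  have hc0 : c.toReal ^ (k - j) ≠ 0 := fun h => hne (by rw [h]; ring)
  have hk0 : (k : ℝ) ≠ 0 := Nat.cast_ne_zero.mpr (by omega)
  have hbj : b.toReal * b.toReal ^ (j - 1) = b.toReal ^ j := by
    rw [← pow_succ']
    congr 1
    omega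
  have hchoose : (j : ℝ) * (k.choose j) = (k : ℝ) * ((k - 1).choose (j - 1)) := by
    have h := Nat.add_one_mul_choose_eq (k - 1) (j - 1)
    rw [show k - 1 + 1 = k by omega,
      show j - 1 + 1 = j by omega] at h
    have h2 := congrArg (Nat.cast : ℕ → ℝ) h
    push_cast at h2
    linarith
  rw [ENNReal.toReal_mul, ENNReal.toReal_inv, hPBr, hPAr, hCm, hCi, hpm]
  rw [show b.toReal * (b.toReal ^ (j - 1) * e.toReal ^ (k - j))
      = b.toReal ^ j * e.toReal ^ (k - j) by rw [← mul_assoc, hbj]]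
  rw [div_pow, inv_mul_eq_div]
  have hrhs : e.toReal ^ (k - j) / c.toReal ^ (k - j) * ((j : ℝ) / k) * d.toReal
      = (e.toReal ^ (k - j) * j * d.toReal) / (c.toReal ^ (k - j) * k) := by
    rw [div_mul_div_comm, div_mul_eq_mul_div]
  rw [hrhs, div_eq_div_iff hne (mul_ne_zero hc0 hk0)]
  linear_combination (-(a.toReal * b.toReal ^ j * c.toReal ^ (k - j) * e.toReal ^ (k - j)
    * d.toReal)) * hchoose
end

section
/- Let n ≥ k+1 and let i be a positive integer. Let B be the event {X_n = i and exactly j of X_{n-k}, …, X_{n-1} are ≥ i}, and assume P(B) > 0. Then P(X_{n+1} = i and exactly j of X_{n-k+1}, …, X_n are ≥ i | B) = (j/k) · p_i. -/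
open MeasureTheory ProbabilityTheory

lemma aux_count_rkr (k j : ℕ) (hj : j ≤ k) (W : Finset ℕ) (hW : W.card = k)
    (a0 : ℕ) (ha0 : a0 ∈ W) :
    ((W.powersetCard j).filter (fun T => a0 ∈ T)).card * k = k.choose j * j := by
  rcases Nat.eq_zero_or_pos j with rfl | hj1
  · simp [Finset.powersetCard_zero, Finset.filter_singleton]
  · have hk1 : 1 ≤ k := le_trans hj1 hj
    have hcard : ((W.powersetCard j).filter (fun T => a0 ∈ T)).card
        = (k - 1).choose (j - 1) := by
      have hbij : ((W.powersetCard j).filter (fun T => a0 ∈ T)).card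
          = ((W.erase a0).powersetCard (j - 1)).card := by
        apply Finset.card_nbij' (fun T => T.erase a0) (fun U => insert a0 U)
        · intro T hT
          simp only [Finset.mem_coe, Finset.mem_filter, Finset.mem_powersetCard] at hT ⊢
          obtain ⟨⟨hsub, hcardT⟩, haT⟩ := hT
          exact ⟨Finset.erase_subset_erase a0 hsub,
            by rw [Finset.card_erase_of_mem haT, hcardT]⟩
        · intro U hU
          simp only [Finset.mem_coe, Finset.mem_filter, Finset.mem_powersetCard] at hU ⊢
          obtain ⟨hsub, hcardU⟩ := hU
          have haU : a0 ∉ U := fun h => (Finset.mem_erase.mp (hsub h)).1 rfl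
          refine ⟨⟨?_, ?_⟩, Finset.mem_insert_self _ _⟩
          · exact Finset.insert_subset ha0 (hsub.trans (Finset.erase_subset _ _))
          · rw [Finset.card_insert_of_notMem haU, hcardU]; omega
        · intro T hT
          simp only [Finset.mem_coe, Finset.mem_filter] at hT
          exact Finset.insert_erase hT.2
        · intro U hU
          simp only [Finset.mem_coe, Finset.mem_powersetCard] at hU
          have haU : a0 ∉ U := fun h => (Finset.mem_erase.mp (hU.1 h)).1 rfl
          exact Finset.erase_insert haU
      rw [hbij, Finset.card_powersetCard, Finset.card_erase_of_mem ha0, hW]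
    rw [hcard, mul_comm]
    have h := Nat.add_one_mul_choose_eq (k - 1) (j - 1)
    have h1 : k - 1 + 1 = k := by omega
    have h2 : j - 1 + 1 = j := by omega
    simp only [Nat.succ_eq_add_one, h1, h2] at h
    exact h

/-- Prediction step, diagonal case `X_{n+1} = X_n = i`. -/
theorem recent_k_record_pred_eq
    {Ω : Type*} [MeasurableSpace Ω] (P : Measure Ω) [IsProbabilityMeasure P]
    (X : ℕ → Ω → ℕ) (hXmeas : ∀ a, Measurable (X a))
    (hXpos : ∀ a ω, 1 ≤ X a ω)
    (hindep : iIndepFun X P)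
    (hident : ∀ a, IdentDistrib (X a) (X 1) P P)
    (k j : ℕ) (hk : 1 ≤ k) (hj : j ≤ k)
    (p S C : ℕ → ℝ)
    (hp : ∀ l, p l = (P {ω | X 1 ω = l}).toReal)
    (hS : ∀ i, S i = (P {ω | i ≤ X 1 ω}).toReal)
    (hC : ∀ i, C i = (P {ω | X 1 ω ≤ i}).toReal)
    (n : ℕ) (hn : k + 1 ≤ n)
    (i : ℕ) (hi : 1 ≤ i)
    (B : Set Ω)
    (hB : B = {ω | X n ω = i ∧
      ((Finset.Icc (n - k) (n - 1)).filter fun t => i ≤ X t ω).card = j})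
    (hBpos : 0 < P B) :
    ((P[|B]) {ω | X (n + 1) ω = i ∧
        ((Finset.Icc (n - k + 1) n).filter fun t => i ≤ X t ω).card = j}).toReal
      = ((j : ℝ) / k) * p i := by
  classical
  set a0 := n - k with ha0_def
  set W : Finset ℕ := Finset.Icc a0 (n - 1) with hW_def
  have hkn : k ≤ n := le_trans (Nat.le_succ k) hn
  have ha01 : 1 ≤ a0 := by omega
  have ha0n1 : a0 ≤ n - 1 := by omega
  have hWcard : W.card = k := by rw [hW_def, Nat.card_Icc]; omega
  have hnW : n ∉ W := by simp only [hW_def, Finset.mem_Icc]; omega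
  have hn1W : n + 1 ∉ insert n W := by
    simp only [Finset.mem_insert, hW_def, Finset.mem_Icc]; omega
  have ha0W : a0 ∈ W := by simp only [hW_def, Finset.mem_Icc]; omega
  -- per-index value sets
  set D : Finset ℕ → ℕ → Set ℕ :=
    fun T t => if t ∈ T then Set.Ici i else Set.Iio i with hD_def
  set piece : Finset ℕ → Set Ω := fun T => ⋂ t ∈ W, X t ⁻¹' D T t with hpiece_def
  -- membership characterization
  have hmem_piece : ∀ T, T ⊆ W → ∀ ω,
      (ω ∈ piece T ↔ (W.filter fun t => i ≤ X t ω) = T) := by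
    intro T hT ω
    simp only [hpiece_def, Set.mem_iInter, Set.mem_preimage]
    constructor
    · intro h
      ext t
      simp only [Finset.mem_filter]
      constructor
      · rintro ⟨htW, hle⟩
        by_contra htT
        have := h t htW
        rw [hD_def] at this
        simp only [if_neg htT, Set.mem_Iio] at this
        omega
      · intro htT
        refine ⟨hT htT, ?_⟩
        have := h t (hT htT)
        rw [hD_def] at this
        simpa only [if_pos htT, Set.mem_Ici] using this
    · intro h t htW
      by_cases htT : t ∈ T
      · have : t ∈ W.filter fun t => i ≤ X t ω := h ▸ htT
        simp only [Finset.mem_filter] at this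
        rw [hD_def]
        simpa only [if_pos htT, Set.mem_Ici] using this.2
      · have : t ∉ W.filter fun t => i ≤ X t ω := h ▸ htT
        simp only [Finset.mem_filter, htW, true_and, not_le] at this
        rw [hD_def]
        simpa only [if_neg htT, Set.mem_Iio] using this
  -- decomposition of B
  have hB_eq : B = ⋃ T ∈ W.powersetCard j, ((X n ⁻¹' {i}) ∩ piece T) := by
    rw [hB]
    ext ω
    simp only [Set.mem_setOf_eq, Set.mem_iUnion, Set.mem_inter_iff, Set.mem_preimage,
      Set.mem_singleton_iff, Finset.mem_powersetCard, exists_prop]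
    constructor
    · rintro ⟨hXn, hcard⟩
      exact ⟨W.filter fun t => i ≤ X t ω,
        ⟨Finset.filter_subset _ _, hcard⟩, hXn,
        (hmem_piece _ (Finset.filter_subset _ _) ω).mpr rfl⟩
    · rintro ⟨T, ⟨hTsub, hTcard⟩, hXn, hpc⟩
      refine ⟨hXn, ?_⟩
      rw [(hmem_piece T hTsub ω).mp hpc, hTcard]
  -- the count over the shifted window
  have hcount : ∀ ω, X n ω = i → ∀ T, T ⊆ W →
      (W.filter fun t => i ≤ X t ω) = T →
      ((Finset.Icc (n - k + 1) n).filter fun t => i ≤ X t ω).card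
        = (T.erase a0).card + 1 := by
    intro ω hXn T hTsub hfil
    have hIcc : Finset.Icc (n - k + 1) n = insert n (W.erase a0) := by
      ext t
      simp only [Finset.mem_Icc, Finset.mem_insert, Finset.mem_erase, hW_def, Finset.mem_Icc]
      omega
    rw [hIcc, Finset.filter_insert, if_pos (by rw [hXn])]
    rw [Finset.card_insert_of_notMem]
    · rw [Finset.filter_erase, hfil]
    · intro hmem
      exact hnW (Finset.erase_subset a0 W ((Finset.filter_subset _ _) hmem))
  -- decomposition of B ∩ A
  set A : Set Ω := {ω | X (n + 1) ω = i ∧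
      ((Finset.Icc (n - k + 1) n).filter fun t => i ≤ X t ω).card = j} with hA_def
  have hBA_eq : B ∩ A = ⋃ T ∈ (W.powersetCard j).filter (fun T => a0 ∈ T),
      ((X (n + 1) ⁻¹' {i}) ∩ ((X n ⁻¹' {i}) ∩ piece T)) := by
    ext ω
    simp only [hA_def, hB, Set.mem_inter_iff, Set.mem_setOf_eq, Set.mem_iUnion,
      Set.mem_preimage, Set.mem_singleton_iff, Finset.mem_filter,
      Finset.mem_powersetCard, exists_prop]
    constructor
    · rintro ⟨⟨hXn, hcard⟩, hXn1, hcard'⟩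
      set T := W.filter fun t => i ≤ X t ω with hT_def
      have hTsub : T ⊆ W := Finset.filter_subset _ _
      have hc := hcount ω hXn T hTsub rfl
      rw [hc] at hcard'
      have haT : a0 ∈ T := by
        by_contra haT
        rw [Finset.erase_eq_of_notMem haT, hcard] at hcard'
        omega
      exact ⟨T, ⟨⟨hTsub, hcard⟩, haT⟩, hXn1, hXn,
        (hmem_piece T hTsub ω).mpr rfl⟩
    · rintro ⟨T, ⟨⟨hTsub, hTcard⟩, haT⟩, hXn1, hXn, hpc⟩
      have hfil := (hmem_piece T hTsub ω).mp hpc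
      have hc := hcount ω hXn T hTsub hfil
      have hj1 : 1 ≤ j := by
        rw [← hTcard]
        exact Finset.card_pos.mpr ⟨a0, haT⟩
      rw [hc, Finset.card_erase_of_mem haT, hTcard]
      exact ⟨⟨hXn, by rw [hfil, hTcard]⟩, hXn1, by omega⟩
  -- product formula
  have hprod : ∀ (F : Finset ℕ) (G : ℕ → Set ℕ),
      P (⋂ t ∈ F, X t ⁻¹' G t) = ∏ t ∈ F, P (X 1 ⁻¹' G t) := by
    intro F G
    rw [hindep.meas_biInter (fun t _ => ⟨G t, .of_discrete, rfl⟩)]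
    exact Finset.prod_congr rfl fun t _ =>
      (hident t).measure_mem_eq .of_discrete
  set aP : ENNReal := P (X 1 ⁻¹' {i}) with haP_def
  set sP : ENNReal := P (X 1 ⁻¹' Set.Ici i) with hsP_def
  set qP : ENNReal := P (X 1 ⁻¹' Set.Iio i) with hqP_def
  set m : ENNReal := sP ^ j * qP ^ (k - j) with hm_def
  -- product over the window
  have hprodW : ∀ T, T ⊆ W → T.card = j →
      ∏ t ∈ W, P (X 1 ⁻¹' D T t) = m := by
    intro T hTsub hTcard
    have h1 : ∀ t, P (X 1 ⁻¹' D T t) = if t ∈ T then sP else qP := by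
      intro t
      rw [hD_def]
      by_cases htT : t ∈ T
      · simp only [if_pos htT, hsP_def]
      · simp only [if_neg htT, hqP_def]
    calc ∏ t ∈ W, P (X 1 ⁻¹' D T t) = ∏ t ∈ W, if t ∈ T then sP else qP :=
          Finset.prod_congr rfl fun t _ => h1 t
      _ = (∏ _t ∈ W.filter (· ∈ T), sP) * ∏ _t ∈ W.filter (· ∉ T), qP :=
          Finset.prod_ite _ _
      _ = sP ^ (W.filter (· ∈ T)).card * qP ^ (W.filter (· ∉ T)).card := by
          rw [Finset.prod_const, Finset.prod_const]
      _ = m := by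
          rw [Finset.filter_mem_eq_inter, Finset.inter_eq_right.mpr hTsub,
            ← Finset.sdiff_eq_filter, Finset.card_sdiff_of_subset hTsub, hWcard, hTcard]
  -- measure of the B-pieces
  have hmeasB_piece : ∀ T ∈ W.powersetCard j,
      P ((X n ⁻¹' {i}) ∩ piece T) = aP * m := by
    intro T hT
    obtain ⟨hTsub, hTcard⟩ := Finset.mem_powersetCard.mp hT
    have hEq : (X n ⁻¹' {i}) ∩ piece T
        = ⋂ t ∈ insert n W, X t ⁻¹' (fun t => if t = n then ({i} : Set ℕ) else D T t) t := by
      ext ω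
      simp only [hpiece_def, Set.mem_inter_iff, Set.mem_preimage, Set.mem_iInter,
        Finset.mem_insert, Set.mem_singleton_iff]
      constructor
      · rintro ⟨h1, h2⟩ t ht
        rcases ht with rfl | htW
        · simp only [if_pos rfl, Set.mem_singleton_iff]; exact h1
        · rw [if_neg (by rintro rfl; exact hnW htW)]; exact h2 t htW
      · intro h
        refine ⟨by simpa using h n (Or.inl rfl), fun t htW => ?_⟩
        have := h t (Or.inr htW)
        rwa [if_neg (by rintro rfl; exact hnW htW)] at this
    rw [hEq, hprod, Finset.prod_insert hnW, if_pos rfl]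
    congr 1
    rw [← hprodW T hTsub hTcard]
    exact Finset.prod_congr rfl fun t htW => by
      rw [if_neg (by rintro rfl; exact hnW htW)]
  -- measure of the BA-pieces
  have hmeasBA_piece : ∀ T ∈ W.powersetCard j,
      P ((X (n + 1) ⁻¹' {i}) ∩ ((X n ⁻¹' {i}) ∩ piece T)) = aP * (aP * m) := by
    intro T hT
    obtain ⟨hTsub, hTcard⟩ := Finset.mem_powersetCard.mp hT
    have hEq : (X (n + 1) ⁻¹' {i}) ∩ ((X n ⁻¹' {i}) ∩ piece T)
        = ⋂ t ∈ insert (n + 1) (insert n W),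
            X t ⁻¹' (fun t => if t = n + 1 then ({i} : Set ℕ)
              else if t = n then ({i} : Set ℕ) else D T t) t := by
      ext ω
      simp only [hpiece_def, Set.mem_inter_iff, Set.mem_preimage, Set.mem_iInter,
        Finset.mem_insert, Set.mem_singleton_iff]
      constructor
      · rintro ⟨h0, h1, h2⟩ t ht
        rcases ht with rfl | rfl | htW
        · simp only [if_pos rfl, Set.mem_singleton_iff]; exact h0
        · rw [if_neg (by omega), if_pos rfl]; exact h1
        · rw [if_neg (by rintro rfl; exact hn1W (Finset.mem_insert_of_mem htW)),
            if_neg (by rintro rfl; exact hnW htW)]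
          exact h2 t htW
      · intro h
        refine ⟨by simpa using h (n + 1) (Or.inl rfl), ?_, fun t htW => ?_⟩
        · have := h n (Or.inr (Or.inl rfl))
          rwa [if_neg (by omega), if_pos rfl] at this
        · have := h t (Or.inr (Or.inr htW))
          rwa [if_neg (by rintro rfl; exact hn1W (Finset.mem_insert_of_mem htW)),
            if_neg (by rintro rfl; exact hnW htW)] at this
    rw [hEq, hprod, Finset.prod_insert hn1W, if_pos rfl, Finset.prod_insert hnW,
      if_neg (by omega), if_pos rfl]
    congr 2
    rw [← hprodW T hTsub hTcard]
    exact Finset.prod_congr rfl fun t htW => by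
      rw [if_neg (by rintro rfl; exact hn1W (Finset.mem_insert_of_mem htW)),
        if_neg (by rintro rfl; exact hnW htW)]
  -- measurability
  have hpiece_meas : ∀ T, MeasurableSet (piece T) := by
    intro T
    rw [hpiece_def]
    exact Finset.measurableSet_biInter _ fun t _ => (hXmeas t) .of_discrete
  -- disjointness
  have hdisjB : Set.PairwiseDisjoint ↑(W.powersetCard j)
      (fun T => (X n ⁻¹' {i}) ∩ piece T) := by
    intro T1 h1 T2 h2 hne
    refine Set.disjoint_left.mpr fun ω hω1 hω2 => hne ?_
    simp only [Finset.coe_sort_coe, Finset.mem_coe, Finset.mem_powersetCard] at h1 h2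
    rw [← (hmem_piece T1 h1.1 ω).mp hω1.2, ← (hmem_piece T2 h2.1 ω).mp hω2.2]
  have hdisjBA : Set.PairwiseDisjoint ↑((W.powersetCard j).filter (fun T => a0 ∈ T))
      (fun T => (X (n + 1) ⁻¹' {i}) ∩ ((X n ⁻¹' {i}) ∩ piece T)) := by
    intro T1 h1 T2 h2 hne
    refine Set.disjoint_left.mpr fun ω hω1 hω2 => hne ?_
    simp only [Finset.coe_filter, Set.mem_setOf_eq, Finset.mem_powersetCard] at h1 h2
    rw [← (hmem_piece T1 h1.1.1 ω).mp hω1.2.2, ← (hmem_piece T2 h2.1.1 ω).mp hω2.2.2]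
  -- measures of B and B ∩ A
  set N : ℕ := ((W.powersetCard j).filter (fun T => a0 ∈ T)).card with hN_def
  have hPB : P B = (k.choose j : ENNReal) * (aP * m) := by
    rw [hB_eq, measure_biUnion_finset hdisjB
      (fun T _ => ((hXmeas n) .of_discrete).inter (hpiece_meas T))]
    rw [Finset.sum_congr rfl hmeasB_piece, Finset.sum_const, Finset.card_powersetCard,
      hWcard, nsmul_eq_mul]
  have hPBA : P (B ∩ A) = (N : ENNReal) * (aP * (aP * m)) := by
    rw [hBA_eq, measure_biUnion_finset hdisjBA
      (fun T _ => ((hXmeas (n + 1)) .of_discrete).inter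
        (((hXmeas n) .of_discrete).inter (hpiece_meas T)))]
    rw [Finset.sum_congr rfl (fun T hT =>
      hmeasBA_piece T (Finset.mem_filter.mp hT).1), Finset.sum_const, nsmul_eq_mul]
  have hNk : N * k = k.choose j * j := aux_count_rkr k j hj W hWcard a0 ha0W
  -- finiteness and positivity
  have hCk0 : (k.choose j : ENNReal) ≠ 0 := Nat.cast_ne_zero.mpr (Nat.choose_pos hj).ne'
  have hCkt : (k.choose j : ENNReal) ≠ ⊤ := ENNReal.natCast_ne_top _
  have ham0 : aP * m ≠ 0 := by
    intro h
    rw [hPB, h, mul_zero] at hBpos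
    exact lt_irrefl 0 hBpos
  have hamt : aP * m ≠ ⊤ :=
    ENNReal.mul_ne_top (measure_ne_top P _)
      (ENNReal.mul_ne_top (ENNReal.pow_ne_top (measure_ne_top P _))
        (ENNReal.pow_ne_top (measure_ne_top P _)))
  -- measurability of B
  have hBmeas : MeasurableSet B := by
    rw [hB_eq]
    exact Finset.measurableSet_biUnion _
      fun T _ => ((hXmeas n) .of_discrete).inter (hpiece_meas T)
  -- conclude
  rw [ProbabilityTheory.cond_apply hBmeas P, hPB, hPBA]
  have hkey : ((k.choose j : ENNReal) * (aP * m))⁻¹ * ((N : ENNReal) * (aP * (aP * m)))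
      = (k.choose j : ENNReal)⁻¹ * (N : ENNReal) * aP := by
    rw [ENNReal.mul_inv (Or.inl hCk0) (Or.inl hCkt)]
    calc (k.choose j : ENNReal)⁻¹ * (aP * m)⁻¹ * ((N : ENNReal) * (aP * (aP * m)))
        = (k.choose j : ENNReal)⁻¹ * (N : ENNReal) * aP * ((aP * m)⁻¹ * (aP * m)) := by
          ring
      _ = (k.choose j : ENNReal)⁻¹ * (N : ENNReal) * aP := by
          rw [ENNReal.inv_mul_cancel ham0 hamt, mul_one]
  rw [hkey, ENNReal.toReal_mul, ENNReal.toReal_mul, ENNReal.toReal_inv,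
    ENNReal.toReal_natCast, ENNReal.toReal_natCast]
  have hpa : p i = aP.toReal := by rw [hp i]; rfl
  rw [hpa]
  have hcast : (N : ℝ) * k = (k.choose j : ℝ) * j := by exact_mod_cast hNk
  have hkpos : (0 : ℝ) < k := by positivity
  have hCkpos : (0 : ℝ) < (k.choose j : ℝ) := by
    exact_mod_cast Nat.choose_pos hj
  have : ((k.choose j : ℝ))⁻¹ * (N : ℝ) = (j : ℝ) / k := by
    rw [inv_mul_eq_div, div_eq_div_iff (ne_of_gt hCkpos) (ne_of_gt hkpos)]
    linear_combination hcast
  rw [this]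
end

section
/- (Prediction rule.) Let n ≥ k+1 and assume P(X_n ∈ R_j^k) > 0. Setting q_i = P(X_n = i | X_n ∈ R_j^k), one has P(X_{n+1} ∈ R_j^k | X_n ∈ R_j^k) = Σ_{i=1}^∞ q_i · [ (j/k) p_i + Σ_{m > i} p_m (S_m/S_i)^j ((k-j)/k) + Σ_{m < i} p_m (C_{m-1}/C_{i-1})^{k-j} (j/k) ]. -/
open MeasureTheory ProbabilityTheory

private lemma prod_meas {Ω : Type*} [MeasurableSpace Ω] (P : Measure Ω) [IsProbabilityMeasure P]
    (X : ℕ → Ω → ℕ)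
    (hindep : iIndepFun X P)
    (hident : ∀ a, IdentDistrib (X a) (X 1) P P)
    (F : Finset ℕ) (A : ℕ → Set ℕ) :
    P (⋂ t ∈ F, X t ⁻¹' A t) = ∏ t ∈ F, P (X 1 ⁻¹' A t) := by
  rw [hindep.measure_inter_preimage_eq_mul F (fun i _ => .of_discrete)]
  exact Finset.prod_congr rfl fun t _ => (hident t).measure_mem_eq .of_discrete

private lemma core_calc (k j i : ℕ) (hk : 1 ≤ k) (hj : j ≤ k) (hi : 1 ≤ i)
    (p S C : ℕ → ℝ)
    (hp0 : ∀ l, 0 ≤ p l) (hpS : ∀ l, p l ≤ S l)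
    (hSanti : ∀ a b, a ≤ b → S b ≤ S a)
    (hCmono : ∀ a b, a ≤ b → C a ≤ C b)
    (hC0 : ∀ a, 0 ≤ C a) (hS0 : ∀ a, 0 ≤ S a)
    (hSummp : Summable p) (hp00 : p 0 = 0)
    (κ₁ κ₂ : ℕ) (hκ₁k : κ₁ * k = j * k.choose j) (hκ₂k : κ₂ * k = (k - j) * k.choose j)
    (r : ℕ → ℝ)
    (hr : ∀ m, r m = (if m ≤ i then (κ₁ : ℝ) else κ₂)
      * (p i * p m * S (max i m) ^ j * C (min i m - 1) ^ (k - j)))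
    (hsum : Summable r)
    (hpi : 0 < p i)
    (ρ q : ℝ) (hqv : q = ρ * ((k.choose j : ℝ) * (p i * S i ^ j * C (i - 1) ^ (k - j)))) :
    ρ * (∑' m, r m) = q * (((j : ℝ) / k) * p i
      + (∑' m : ℕ, if i < m then p m * (S m / S i) ^ j * (((k : ℝ) - j) / k) else 0)
      + ∑ m ∈ Finset.Ico 1 i, p m * (C (m - 1) / C (i - 1)) ^ (k - j) * ((j : ℝ) / k)) := by
  have hk0 : (0 : ℝ) < k := by positivity
  have hSi : 0 < S i := lt_of_lt_of_le hpi (hpS i)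
  have E1 : (k.choose j : ℝ) * ((j : ℝ) / k) = κ₁ := by
    have : (κ₁ : ℝ) * k = j * k.choose j := by exact_mod_cast congrArg Nat.cast hκ₁k
    field_simp
    linarith
  have E2 : (k.choose j : ℝ) * (((k : ℝ) - j) / k) = κ₂ := by
    have h1 : (κ₂ : ℝ) * k = ((k : ℝ) - j) * k.choose j := by
      have := congrArg (Nat.cast : ℕ → ℝ) hκ₂k
      push_cast [Nat.cast_sub hj] at this
      linarith
    field_simp
    linarith
  have E4 : ∀ m, S i ^ j * (S m / S i) ^ j = S m ^ j := by
    intro m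
    rw [div_pow, mul_div_cancel₀ _ (pow_ne_zero _ (ne_of_gt hSi))]
  have E3 : ∀ m, 1 ≤ m → m < i →
      C (i - 1) ^ (k - j) * (C (m - 1) / C (i - 1)) ^ (k - j) = C (m - 1) ^ (k - j) := by
    intro m _ hmi
    by_cases hCi : C (i - 1) = 0
    · rcases Nat.eq_zero_or_pos (k - j) with hkj | hkj
      · simp [hkj]
      · have hCm : C (m - 1) = 0 :=
          le_antisymm (hCi ▸ hCmono (m - 1) (i - 1) (by omega)) (hC0 _)
        rw [hCi, hCm, zero_pow (by omega : k - j ≠ 0)]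
        ring
    · rw [div_pow, mul_div_cancel₀ _ (pow_ne_zero _ hCi)]
  -- summability of the ite function
  have hf : Summable (fun m => if i < m then p m * (S m / S i) ^ j * (((k : ℝ) - j) / k)
      else 0) := by
    have hjk : (j : ℝ) ≤ (k : ℝ) := by exact_mod_cast hj
    have h3 : (0:ℝ) ≤ ((k : ℝ) - j) / k := by
      apply div_nonneg <;> linarith
    have h4 : ∀ m, (0:ℝ) ≤ (S m / S i) ^ j :=
      fun m => pow_nonneg (div_nonneg (hS0 m) hSi.le) j
    apply Summable.of_nonneg_of_le _ _ hSummp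
    · intro m
      by_cases him : i < m
      · rw [if_pos him]
        exact mul_nonneg (mul_nonneg (hp0 m) (h4 m)) h3
      · rw [if_neg him]
    · intro m
      by_cases him : i < m
      · rw [if_pos him]
        have h1 : (S m / S i) ^ j ≤ 1 := by
          apply pow_le_one₀ (div_nonneg (hS0 m) hSi.le)
          rw [div_le_one hSi]
          exact hSanti i m (le_of_lt him)
        have h2 : ((k : ℝ) - j) / k ≤ 1 := by
          rw [div_le_one hk0]
          have : (0:ℝ) ≤ (j:ℝ) := by positivity
          linarith
        calc p m * (S m / S i) ^ j * (((k : ℝ) - j) / k)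
            ≤ p m * 1 * 1 := by
              apply mul_le_mul _ h2 h3 (mul_nonneg (hp0 m) (by linarith [h1, h4 m]))
              apply mul_le_mul le_rfl h1 (h4 m) (hp0 m)
          _ = p m := by ring
      · rw [if_neg him]
        exact hp0 m
  -- closed form for ∑' r
  have hr0 : r 0 = 0 := by rw [hr]; simp [hp00]
  have hhead2 : ∑ m ∈ Finset.range i, r m = ∑ m ∈ Finset.Ico 1 i, r m := by
    symm
    apply Finset.sum_subset
    · intro x hx
      rw [Finset.mem_Ico] at hx
      rw [Finset.mem_range]
      omega
    · intro x hx hnx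
      rw [Finset.mem_range] at hx
      rw [Finset.mem_Ico] at hnx
      have : x = 0 := by omega
      rw [this, hr0]
  have htsum : ∑' m, r m = (∑ m ∈ Finset.Ico 1 i, r m + r i) + ∑' m, r (m + (i + 1)) := by
    rw [← Summable.sum_add_tsum_nat_add (i + 1) hsum, Finset.sum_range_succ, hhead2]
  have hIte : (∑' m : ℕ, if i < m then p m * (S m / S i) ^ j * (((k : ℝ) - j) / k) else 0)
      = ∑' m : ℕ, p (m + (i + 1)) * (S (m + (i + 1)) / S i) ^ j * (((k : ℝ) - j) / k) := by
    rw [← Summable.sum_add_tsum_nat_add (i + 1) hf]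
    have h0 : ∑ m ∈ Finset.range (i + 1),
        (if i < m then p m * (S m / S i) ^ j * (((k : ℝ) - j) / k) else 0) = 0 := by
      apply Finset.sum_eq_zero
      intro m hm
      rw [Finset.mem_range] at hm
      rw [if_neg (by omega)]
    rw [h0, zero_add]
    exact tsum_congr fun m => if_pos (by omega)
  -- per-term values
  have hri : r i = κ₁ * (p i * p i * S i ^ j * C (i - 1) ^ (k - j)) := by
    rw [hr]
    simp
  have hrm : ∀ m, 1 ≤ m → m < i →
      r m = κ₁ * (p i * p m * S i ^ j * C (m - 1) ^ (k - j)) := by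
    intro m h1 h2
    rw [hr, if_pos (by omega), max_eq_left (by omega), min_eq_right (by omega)]
  have hrt : ∀ m, r (m + (i + 1))
      = κ₂ * (p i * p (m + (i + 1)) * S (m + (i + 1)) ^ j * C (i - 1) ^ (k - j)) := by
    intro m
    rw [hr, if_neg (by omega), max_eq_right (by omega), min_eq_left (by omega)]
  -- the three groupwise identities
  have g1 : ρ * r i = q * (((j : ℝ) / k) * p i) := by
    rw [hri, hqv, ← E1]; ring
  have g3 : ∀ m, 1 ≤ m → m < i → ρ * r m
      = q * (p m * (C (m - 1) / C (i - 1)) ^ (k - j) * ((j : ℝ) / k)) := by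
    intro m h1 h2
    rw [hrm m h1 h2, hqv, ← E1, ← E3 m h1 h2]; ring
  have g2 : ∀ m, ρ * r (m + (i + 1))
      = q * (p (m + (i + 1)) * (S (m + (i + 1)) / S i) ^ j * (((k : ℝ) - j) / k)) := by
    intro m
    rw [hrt m, hqv, ← E2, ← E4 (m + (i + 1))]; ring
  -- assemble
  rw [htsum, hIte]
  rw [mul_add, mul_add, mul_add, mul_add]
  rw [← tsum_mul_left, ← tsum_mul_left]
  rw [Finset.mul_sum, Finset.mul_sum]
  rw [tsum_congr g2]
  have hsum3 : ∑ m ∈ Finset.Ico 1 i, ρ * r m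
      = ∑ m ∈ Finset.Ico 1 i, q * (p m * (C (m - 1) / C (i - 1)) ^ (k - j) * ((j : ℝ) / k)) := by
    apply Finset.sum_congr rfl
    intro m hm
    rw [Finset.mem_Ico] at hm
    exact g3 m hm.1 hm.2
  rw [hsum3, g1]
  ring

/-- Prediction rule: with `q_i = P(Xₙ = i | Xₙ ∈ R_j^k)`,
`P(X_{n+1} ∈ R_j^k | Xₙ ∈ R_j^k) = ∑_{i≥1} q_i [ (j/k) pᵢ
  + ∑_{m>i} p_m (S_m/S_i)^j ((k-j)/k) + ∑_{m<i} p_m (C_{m-1}/C_{i-1})^{k-j} (j/k) ]`. -/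
theorem recent_k_record_prediction_rule
    {Ω : Type*} [MeasurableSpace Ω] (P : Measure Ω) [IsProbabilityMeasure P]
    (X : ℕ → Ω → ℕ) (hXmeas : ∀ a, Measurable (X a))
    (hXpos : ∀ a ω, 1 ≤ X a ω)
    (hindep : iIndepFun X P)
    (hident : ∀ a, IdentDistrib (X a) (X 1) P P)
    (k j : ℕ) (hk : 1 ≤ k) (hj : j ≤ k)
    (p S C : ℕ → ℝ)
    (hp : ∀ l, p l = (P {ω | X 1 ω = l}).toReal)
    (hS : ∀ i, S i = (P {ω | i ≤ X 1 ω}).toReal)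
    (hC : ∀ i, C i = (P {ω | X 1 ω ≤ i}).toReal)
    (n : ℕ) (hn : k + 1 ≤ n)
    (B : Set Ω)
    (hB : B = {ω | ((Finset.Icc (n - k) (n - 1)).filter fun t => X n ω ≤ X t ω).card = j})
    (hBpos : 0 < P B)
    (q : ℕ → ℝ) (hq : ∀ i, q i = ((P[|B]) {ω | X n ω = i}).toReal) :
    ((P[|B]) {ω |
        ((Finset.Icc (n + 1 - k) n).filter fun t => X (n + 1) ω ≤ X t ω).card = j}).toReal
      = ∑' i : ℕ, if 1 ≤ i then
          q i * (((j : ℝ) / k) * p i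
            + (∑' m : ℕ, if i < m then p m * (S m / S i) ^ j * (((k : ℝ) - j) / k) else 0)
            + ∑ m ∈ Finset.Ico 1 i, p m * (C (m - 1) / C (i - 1)) ^ (k - j) * ((j : ℝ) / k))
        else 0 := by
  classical
  -- basic index bookkeeping
  set d : ℕ := n - k with hd
  set W : Finset ℕ := Finset.Icc (n - k) (n - 1) with hW
  have hWcard : W.card = k := by rw [hW, Nat.card_Icc]; omega
  have hdW : d ∈ W := by rw [hW]; simp [Finset.mem_Icc]; omega
  have hWlt : ∀ t ∈ W, t < n := by intro t ht; rw [hW, Finset.mem_Icc] at ht; omega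
  have hWcard' : (W.erase d).card = k - 1 := by rw [Finset.card_erase_of_mem hdW, hWcard]
  have hW' : Finset.Icc (n + 1 - k) n = insert n (W.erase d) := by
    ext t
    simp only [Finset.mem_Icc, Finset.mem_insert, Finset.mem_erase, hW, hd]
    omega
  have hnW : n ∉ W.erase d := by
    intro h; exact absurd (hWlt n (Finset.mem_of_mem_erase h)) (lt_irrefl n)
  -- the target event
  set A' : Set Ω := {ω |
      ((Finset.Icc (n + 1 - k) n).filter fun t => X (n + 1) ω ≤ X t ω).card = j} with hA'
  -- elementary probabilities as ENNReal
  set Pe : ℕ → ENNReal := fun l => P (X 1 ⁻¹' {l}) with hPe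
  set Se : ℕ → ENNReal := fun i => P (X 1 ⁻¹' Set.Ici i) with hSe
  set Ce : ℕ → ENNReal := fun i => P (X 1 ⁻¹' Set.Iio i) with hCe
  have hPe_ne : ∀ l, Pe l ≠ ⊤ := fun l => measure_ne_top P _
  have hp' : ∀ l, p l = (Pe l).toReal := by
    intro l; rw [hp l]; rfl
  have hS' : ∀ i, S i = (Se i).toReal := by
    intro i; rw [hS i]; rfl
  have hX0 : ∀ a, X a ⁻¹' {0} = (∅ : Set Ω) := by
    intro a
    ext ω
    simp only [Set.mem_preimage, Set.mem_singleton_iff, Set.mem_empty_iff_false, iff_false]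
    have := hXpos a ω; omega
  have hC' : ∀ m, (Ce m).toReal = C (m - 1) := by
    intro m
    rw [hC (m - 1), hCe]
    have : X 1 ⁻¹' Set.Iio m = {ω | X 1 ω ≤ m - 1} := by
      ext x
      simp only [Set.mem_preimage, Set.mem_Iio, Set.mem_setOf_eq]
      have := hXpos 1 x
      omega
    simp only [this]
  have hp0 : Pe 0 = 0 := by
    simp only [hPe, hX0 1, measure_empty]
  -- the product-event sets
  set As : Finset ℕ → ℕ → ℕ → ℕ → Set ℕ := fun T i m t =>
    if t = n then {i} else if t = n + 1 then {m}
    else if t ∈ T then Set.Ici (max i m) else Set.Iio (min i m) with hAs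
  set G : Finset ℕ → ℕ → ℕ → Set Ω := fun T i m =>
    ⋂ t ∈ insert n (insert (n + 1) W), X t ⁻¹' As T i m t with hG
  have hGmem : ∀ T i m ω, ω ∈ G T i m ↔
      X n ω = i ∧ X (n + 1) ω = m ∧
        ∀ t ∈ W, (t ∈ T → max i m ≤ X t ω) ∧ (t ∉ T → X t ω < min i m) := by
    intro T i m ω
    have hne : (n + 1 : ℕ) ≠ n := by omega
    simp only [hG, hAs, Set.mem_iInter, Finset.mem_insert, Set.mem_preimage]
    constructor
    · intro h
      have h1 := h n (Or.inl rfl)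
      have h2 := h (n + 1) (Or.inr (Or.inl rfl))
      rw [if_pos rfl] at h1
      rw [if_neg hne, if_pos rfl] at h2
      refine ⟨h1, h2, fun t ht => ?_⟩
      have h3 := h t (Or.inr (Or.inr ht))
      have htn : t ≠ n := by have := hWlt t ht; omega
      have htn1 : t ≠ n + 1 := by have := hWlt t ht; omega
      rw [if_neg htn, if_neg htn1] at h3
      constructor
      · intro hT; rwa [if_pos hT] at h3
      · intro hT; rwa [if_neg hT] at h3
    · rintro ⟨h1, h2, h3⟩ t ht
      rcases ht with rfl | rfl | ht
      · rw [if_pos rfl]; exact h1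
      · rw [if_neg hne, if_pos rfl]; exact h2
      · have htn : t ≠ n := by have := hWlt t ht; omega
        have htn1 : t ≠ n + 1 := by have := hWlt t ht; omega
        rw [if_neg htn, if_neg htn1]
        by_cases hT : t ∈ T
        · rw [if_pos hT]; exact (h3 t ht).1 hT
        · rw [if_neg hT]; exact (h3 t ht).2 hT
  have hGmeas : ∀ T i m, MeasurableSet (G T i m) := by
    intro T i m
    rw [hG]
    exact MeasurableSet.biInter (Finset.countable_toSet _)
      (fun t _ => (hXmeas t) (.of_discrete))
  have hPG : ∀ T i m, T ⊆ W → T.card = j →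
      P (G T i m) = Pe i * Pe m * Se (max i m) ^ j * Ce (min i m) ^ (k - j) := by
    intro T i m hTW hTc
    have hnW0 : n ∉ W := fun h => absurd (hWlt n h) (lt_irrefl n)
    have hn1W : (n + 1) ∉ W := fun h => by have := hWlt (n + 1) h; omega
    have hne : (n + 1 : ℕ) ≠ n := by omega
    have hni : n ∉ insert (n + 1) W := by
      simp only [Finset.mem_insert]
      push_neg
      exact ⟨hne.symm, hnW0⟩
    rw [hG]
    simp only
    rw [prod_meas P X hindep hident, Finset.prod_insert hni, Finset.prod_insert hn1W]
    have e1 : As T i m n = {i} := by rw [hAs]; simp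
    have e2 : As T i m (n + 1) = {m} := by rw [hAs]; simp [hne]
    rw [e1, e2]
    have ePi : P (X 1 ⁻¹' {i}) = Pe i := by rw [hPe]
    have ePm : P (X 1 ⁻¹' {m}) = Pe m := by rw [hPe]
    rw [ePi, ePm]
    have e3 : ∀ t ∈ W, P (X 1 ⁻¹' As T i m t)
        = if t ∈ T then Se (max i m) else Ce (min i m) := by
      intro t ht
      have htn : t ≠ n := by have := hWlt t ht; omega
      have htn1 : t ≠ n + 1 := by have := hWlt t ht; omega
      rw [hAs]
      simp only [if_neg htn, if_neg htn1]
      by_cases hT : t ∈ T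
      · rw [if_pos hT, if_pos hT, hSe]
      · rw [if_neg hT, if_neg hT, hCe]
    rw [Finset.prod_congr rfl e3, Finset.prod_ite, Finset.prod_const, Finset.prod_const]
    have e4 : W.filter (· ∈ T) = T := by
      rw [Finset.filter_mem_eq_inter, Finset.inter_eq_right.2 hTW]
    have e5 : (W.filter (· ∉ T)).card = k - j := by
      rw [Finset.filter_not, Finset.card_sdiff_of_subset, hWcard, e4, hTc]
      · rw [e4]; exact hTW
    rw [e4, e5, hTc]; ring
  -- analogous sets for `B` alone
  set As2 : Finset ℕ → ℕ → ℕ → Set ℕ := fun T i t =>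
    if t = n then {i} else if t ∈ T then Set.Ici i else Set.Iio i with hAs2
  set G2 : Finset ℕ → ℕ → Set Ω := fun T i =>
    ⋂ t ∈ insert n W, X t ⁻¹' As2 T i t with hG2
  have hG2mem : ∀ T i ω, ω ∈ G2 T i ↔
      X n ω = i ∧ ∀ t ∈ W, (t ∈ T → i ≤ X t ω) ∧ (t ∉ T → X t ω < i) := by
    intro T i ω
    simp only [hG2, hAs2, Set.mem_iInter, Finset.mem_insert, Set.mem_preimage]
    constructor
    · intro h
      have h1 := h n (Or.inl rfl)
      rw [if_pos rfl] at h1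
      refine ⟨h1, fun t ht => ?_⟩
      have h3 := h t (Or.inr ht)
      have htn : t ≠ n := by have := hWlt t ht; omega
      rw [if_neg htn] at h3
      constructor
      · intro hT; rwa [if_pos hT] at h3
      · intro hT; rwa [if_neg hT] at h3
    · rintro ⟨h1, h3⟩ t ht
      rcases ht with rfl | ht
      · rw [if_pos rfl]; exact h1
      · have htn : t ≠ n := by have := hWlt t ht; omega
        rw [if_neg htn]
        by_cases hT : t ∈ T
        · rw [if_pos hT]; exact (h3 t ht).1 hT
        · rw [if_neg hT]; exact (h3 t ht).2 hT
  have hG2meas : ∀ T i, MeasurableSet (G2 T i) := by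
    intro T i
    rw [hG2]
    exact MeasurableSet.biInter (Finset.countable_toSet _)
      (fun t _ => (hXmeas t) (.of_discrete))
  have hPG2 : ∀ T i, T ⊆ W → T.card = j →
      P (G2 T i) = Pe i * Se i ^ j * Ce i ^ (k - j) := by
    intro T i hTW hTc
    have hnW0 : n ∉ W := fun h => absurd (hWlt n h) (lt_irrefl n)
    rw [hG2]
    simp only
    rw [prod_meas P X hindep hident, Finset.prod_insert hnW0]
    have e1 : As2 T i n = {i} := by rw [hAs2]; simp
    rw [e1]
    have ePi : P (X 1 ⁻¹' {i}) = Pe i := by rw [hPe]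
    rw [ePi]
    have e3 : ∀ t ∈ W, P (X 1 ⁻¹' As2 T i t)
        = if t ∈ T then Se i else Ce i := by
      intro t ht
      have htn : t ≠ n := by have := hWlt t ht; omega
      rw [hAs2]
      simp only [if_neg htn]
      by_cases hT : t ∈ T
      · rw [if_pos hT, if_pos hT, hSe]
      · rw [if_neg hT, if_neg hT, hCe]
    rw [Finset.prod_congr rfl e3, Finset.prod_ite, Finset.prod_const, Finset.prod_const]
    have e4 : W.filter (· ∈ T) = T := by
      rw [Finset.filter_mem_eq_inter, Finset.inter_eq_right.2 hTW]
    have e5 : (W.filter (· ∉ T)).card = k - j := by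
      rw [Finset.filter_not, Finset.card_sdiff_of_subset, hWcard, e4, hTc]
      · rw [e4]; exact hTW
    rw [e4, e5, hTc]; ring
  -- decomposition of B over the value of `X n`
  have hBdec : ∀ i, B ∩ X n ⁻¹' {i} = ⋃ T ∈ W.powersetCard j, G2 T i := by
    intro i
    ext ω
    simp only [Set.mem_inter_iff, Set.mem_preimage, Set.mem_singleton_iff, Set.mem_iUnion,
      Finset.mem_powersetCard, hB, Set.mem_setOf_eq]
    constructor
    · rintro ⟨hcard, hXn⟩
      refine ⟨W.filter (fun t => i ≤ X t ω), ⟨⟨Finset.filter_subset _ _, ?_⟩, ?_⟩⟩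
      · rw [← hcard]
        congr 1
        apply Finset.filter_congr
        intro t ht
        rw [hXn]
      · rw [hG2mem]
        refine ⟨hXn, fun t ht => ⟨fun hT => ?_, fun hT => ?_⟩⟩
        · exact (Finset.mem_filter.1 hT).2
        · by_contra hc
          exact hT (Finset.mem_filter.2 ⟨ht, by omega⟩)
    · rintro ⟨T, ⟨hTW, hTc⟩, hωG⟩
      rw [hG2mem] at hωG
      obtain ⟨hXn, hcond⟩ := hωG
      refine ⟨?_, hXn⟩
      have : W.filter (fun t => X n ω ≤ X t ω) = T := by
        apply Finset.ext
        intro t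
        simp only [Finset.mem_filter]
        constructor
        · rintro ⟨ht, hle⟩
          by_contra hT
          have := (hcond t ht).2 hT
          rw [hXn] at hle
          omega
        · intro hT
          refine ⟨hTW hT, ?_⟩
          rw [hXn]
          exact (hcond t (hTW hT)).1 hT
      rw [this, hTc]
  have hG2disj : ∀ i, (W.powersetCard j : Set (Finset ℕ)).PairwiseDisjoint
      (fun T => G2 T i) := by
    intro i T hT T' hT' hne
    simp only [Finset.mem_coe, Finset.mem_powersetCard] at hT hT'
    rw [Function.onFun, Set.disjoint_left]
    intro ω h1 h2
    rw [hG2mem] at h1 h2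
    obtain ⟨t, ht⟩ : ∃ t, (t ∈ T ∧ t ∉ T') ∨ (t ∈ T' ∧ t ∉ T) := by
      by_contra hc
      push_neg at hc
      exact hne (Finset.ext fun t => by have := hc t; tauto)
    rcases ht with ⟨htT, htT'⟩ | ⟨htT', htT⟩
    · have h1' := (h1.2 t (hT.1 htT)).1 htT
      have h2' := (h2.2 t (hT.1 htT)).2 htT'
      omega
    · have h1' := (h1.2 t (hT'.1 htT')).2 htT
      have h2' := (h2.2 t (hT'.1 htT')).1 htT'
      omega
  have hPBi : ∀ i, P (B ∩ X n ⁻¹' {i})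
      = (k.choose j) * (Pe i * Se i ^ j * Ce i ^ (k - j)) := by
    intro i
    rw [hBdec i, measure_biUnion_finset (hG2disj i) (fun T _ => hG2meas T i)]
    have e : ∑ T ∈ W.powersetCard j, P (G2 T i)
        = ∑ _T ∈ W.powersetCard j, (Pe i * Se i ^ j * Ce i ^ (k - j)) :=
      Finset.sum_congr rfl (fun T hT => hPG2 T i (Finset.mem_powersetCard.1 hT).1
        (Finset.mem_powersetCard.1 hT).2)
    rw [e, Finset.sum_const, Finset.card_powersetCard, hWcard, nsmul_eq_mul]
  have hBmeas : MeasurableSet B := by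
    have : B = ⋃ i, B ∩ X n ⁻¹' {i} := by
      ext ω
      simp only [Set.mem_iUnion, Set.mem_inter_iff, Set.mem_preimage, Set.mem_singleton_iff]
      exact ⟨fun h => ⟨X n ω, h, rfl⟩, fun ⟨i, h, _⟩ => h⟩
    rw [this]
    exact MeasurableSet.iUnion fun i => by
      rw [hBdec i]
      exact MeasurableSet.biUnion (Finset.countable_toSet _) (fun T _ => hG2meas T i)
  -- the key combinatorial identity
  have hkey : ∀ i m, 1 ≤ i → 1 ≤ m →
      B ∩ A' ∩ X n ⁻¹' {i} ∩ X (n + 1) ⁻¹' {m}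
        = ⋃ T ∈ (W.powersetCard j).filter (fun T => (m ≤ i ↔ d ∈ T)), G T i m := by
    intro i m hi hm
    ext ω
    simp only [Set.mem_inter_iff, Set.mem_preimage, Set.mem_singleton_iff, Set.mem_iUnion,
      Finset.mem_filter, Finset.mem_powersetCard, hB, hA', Set.mem_setOf_eq, hW']
    constructor
    · rintro ⟨⟨⟨hBω, hA'ω⟩, hXn⟩, hXm⟩
      rw [hXm] at hA'ω
      set T : Finset ℕ := W.filter (fun t => i ≤ X t ω) with hT
      have hTW : T ⊆ W := Finset.filter_subset _ _
      have hTc : T.card = j := by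
        rw [← hBω, hT]
        congr 1
        apply Finset.filter_congr
        intro t ht
        rw [hXn]
      set U : Finset ℕ := (W.erase d).filter (fun t => m ≤ X t ω) with hU
      have hfi : Finset.filter (fun t => m ≤ X t ω) (insert n (W.erase d))
          = if m ≤ X n ω then insert n U else U := by
        rw [Finset.filter_insert]
      have hnU : n ∉ U := fun h => hnW (Finset.mem_of_mem_filter n h)
      by_cases hmi : m ≤ i
      · have hcard : U.card + 1 = j := by
          rw [hfi, hXn, if_pos hmi, Finset.card_insert_of_notMem hnU] at hA'ω
          exact hA'ω
        have hsub : T.erase d ⊆ U := by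
          intro t ht
          rw [Finset.mem_erase] at ht
          obtain ⟨htd, htT⟩ := ht
          rw [hT, Finset.mem_filter] at htT
          rw [hU, Finset.mem_filter, Finset.mem_erase]
          exact ⟨⟨htd, htT.1⟩, le_trans hmi htT.2⟩
        have hdT : d ∈ T := by
          by_contra hdT
          have h1 : T.erase d = T := Finset.erase_eq_of_notMem hdT
          rw [h1] at hsub
          have := Finset.card_le_card hsub
          omega
        have hUeq : T.erase d = U := by
          apply Finset.eq_of_subset_of_card_le hsub
          rw [Finset.card_erase_of_mem hdT, hTc]
          omega
        refine ⟨T, ⟨⟨hTW, hTc⟩, by tauto⟩, ?_⟩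
        rw [hGmem]
        refine ⟨hXn, hXm, fun t ht => ⟨fun htT => ?_, fun htT => ?_⟩⟩
        · rw [max_eq_left hmi]
          rw [hT, Finset.mem_filter] at htT
          exact htT.2
        · rw [min_eq_right hmi]
          by_contra hc
          push_neg at hc
          have htd : t ≠ d := by
            rintro rfl; exact htT hdT
          have : t ∈ U := by
            rw [hU, Finset.mem_filter, Finset.mem_erase]
            exact ⟨⟨htd, ht⟩, hc⟩
          rw [← hUeq, Finset.mem_erase] at this
          exact htT this.2
      · have hcard : U.card = j := by
          rw [hfi, hXn, if_neg hmi] at hA'ω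
          exact hA'ω
        have hsub : U ⊆ T.erase d := by
          intro t ht
          rw [hU, Finset.mem_filter, Finset.mem_erase] at ht
          obtain ⟨⟨htd, htW⟩, htm⟩ := ht
          rw [Finset.mem_erase, hT, Finset.mem_filter]
          exact ⟨htd, htW, by omega⟩
        have hdT : d ∉ T := by
          intro hdT
          have h1 := Finset.card_le_card hsub
          rw [Finset.card_erase_of_mem hdT, hTc, hcard] at h1
          have hj1 : 1 ≤ j := by
            rw [← hTc]
            exact Finset.card_pos.2 ⟨d, hdT⟩
          omega
        have hUeq : U = T := by
          have h2 : T.erase d = T := Finset.erase_eq_of_notMem hdT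
          rw [h2] at hsub
          exact Finset.eq_of_subset_of_card_le hsub (by omega)
        refine ⟨T, ⟨⟨hTW, hTc⟩, by tauto⟩, ?_⟩
        rw [hGmem]
        refine ⟨hXn, hXm, fun t ht => ⟨fun htT => ?_, fun htT => ?_⟩⟩
        · rw [max_eq_right (by omega : i ≤ m)]
          rw [← hUeq, hU, Finset.mem_filter] at htT
          exact htT.2
        · rw [min_eq_left (by omega : i ≤ m)]
          rw [hT, Finset.mem_filter] at htT
          push_neg at htT
          by_contra hc
          push_neg at hc
          exact absurd (htT ht) (by omega)
    · rintro ⟨T, ⟨⟨hTW, hTc⟩, hiff⟩, hωG⟩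
      rw [hGmem] at hωG
      obtain ⟨hXn, hXm, hcond⟩ := hωG
      have hTfil : W.filter (fun t => X n ω ≤ X t ω) = T := by
        apply Finset.ext
        intro t
        simp only [Finset.mem_filter, hXn]
        constructor
        · rintro ⟨ht, hle⟩
          by_contra htT
          have := (hcond t ht).2 htT
          have : X t ω < i := lt_of_lt_of_le this (min_le_left i m)
          omega
        · intro htT
          exact ⟨hTW htT, le_trans (le_max_left i m) ((hcond t (hTW htT)).1 htT)⟩
      have hUeq : (W.erase d).filter (fun t => m ≤ X t ω) = T.erase d := by
        apply Finset.ext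
        intro t
        simp only [Finset.mem_filter, Finset.mem_erase]
        constructor
        · rintro ⟨⟨htd, htW⟩, htm⟩
          refine ⟨htd, ?_⟩
          by_contra htT
          have := (hcond t htW).2 htT
          have : X t ω < m := lt_of_lt_of_le this (min_le_right i m)
          omega
        · rintro ⟨htd, htT⟩
          exact ⟨⟨htd, hTW htT⟩,
            le_trans (le_max_right i m) ((hcond t (hTW htT)).1 htT)⟩
      refine ⟨⟨⟨?_, ?_⟩, hXn⟩, hXm⟩
      · rw [hTfil, hTc]
      · rw [hXm, Finset.filter_insert, hUeq]
        by_cases hmi : m ≤ X n ω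
        · rw [if_pos hmi]
          rw [hXn] at hmi
          have hdT : d ∈ T := hiff.1 hmi
          have hnT : n ∉ T.erase d := fun h => hnW (Finset.mem_erase.2
            ⟨(Finset.mem_erase.1 h).1, hTW (Finset.mem_erase.1 h).2⟩)
          rw [Finset.card_insert_of_notMem hnT, Finset.card_erase_of_mem hdT, hTc]
          have : 1 ≤ j := by
            rw [← hTc]; exact Finset.card_pos.2 ⟨d, hdT⟩
          omega
        · rw [if_neg hmi]
          rw [hXn] at hmi
          have hdT : d ∉ T := fun h => hmi (hiff.2 h)
          rw [Finset.erase_eq_of_notMem hdT, hTc]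
  -- the combinatorial counts
  set κ₁ : ℕ := ((W.powersetCard j).filter (fun T => d ∈ T)).card with hκ₁
  set κ₂ : ℕ := ((W.powersetCard j).filter (fun T => d ∉ T)).card with hκ₂
  have hκ₂eq : κ₂ = (k - 1).choose j := by
    have : (W.powersetCard j).filter (fun T => d ∉ T) = (W.erase d).powersetCard j := by
      ext T
      simp only [Finset.mem_filter, Finset.mem_powersetCard, Finset.subset_erase]
      tauto
    rw [hκ₂, this, Finset.card_powersetCard, Finset.card_erase_of_mem hdW, hWcard]
  have hκsum : κ₁ + κ₂ = k.choose j := by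
    rw [hκ₁, hκ₂, Finset.card_filter_add_card_filter_not,
      Finset.card_powersetCard, hWcard]
  have hκ₂k : κ₂ * k = (k - j) * k.choose j := by
    rw [hκ₂eq]
    have h := Nat.choose_mul_succ_eq (k - 1) j
    have hk1 : k - 1 + 1 = k := by omega
    rw [hk1] at h
    rw [h, Nat.mul_comm]
  have hκ₁k : κ₁ * k = j * k.choose j := by
    have h3 : κ₁ * k + κ₂ * k = k.choose j * k := by rw [← Nat.add_mul, hκsum]
    have h4 : (k - j) * k.choose j + j * k.choose j = k * k.choose j := by
      rw [← Nat.add_mul]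
      congr 1
      omega
    nlinarith [h3, h4, hκ₂k]
  -- per (i,m) measure
  set ν : ℕ → ℕ → ENNReal := fun i m =>
    (if m ≤ i then (κ₁ : ENNReal) else κ₂) * (Pe i * Pe m * Se (max i m) ^ j
      * Ce (min i m) ^ (k - j)) with hν
  have hGdisj : ∀ i m, 1 ≤ i → 1 ≤ m →
      (((W.powersetCard j).filter (fun T => (m ≤ i ↔ d ∈ T))
        : Finset (Finset ℕ)) : Set (Finset ℕ)).PairwiseDisjoint (fun T => G T i m) := by
    intro i m hi hm T hT T' hT' hne
    simp only [Finset.mem_coe, Finset.mem_filter, Finset.mem_powersetCard] at hT hT'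
    rw [Function.onFun, Set.disjoint_left]
    intro ω h1 h2
    rw [hGmem] at h1 h2
    obtain ⟨t, ht⟩ : ∃ t, (t ∈ T ∧ t ∉ T') ∨ (t ∈ T' ∧ t ∉ T) := by
      by_contra hc
      push_neg at hc
      exact hne (Finset.ext fun t => by have := hc t; tauto)
    have hminmax : min i m ≤ max i m := le_trans (min_le_left i m) (le_max_left i m)
    rcases ht with ⟨htT, htT'⟩ | ⟨htT', htT⟩
    · have e1 := (h1.2.2 t (hT.1.1 htT)).1 htT
      have e2 := (h2.2.2 t (hT.1.1 htT)).2 htT'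
      omega
    · have e1 := (h1.2.2 t (hT'.1.1 htT')).2 htT
      have e2 := (h2.2.2 t (hT'.1.1 htT')).1 htT'
      omega
  have hνBA : ∀ i m, P (B ∩ A' ∩ X n ⁻¹' {i} ∩ X (n + 1) ⁻¹' {m}) = ν i m := by
    intro i m
    rcases Nat.eq_zero_or_pos i with rfl | hi
    · have : B ∩ A' ∩ X n ⁻¹' {0} ∩ X (n + 1) ⁻¹' {m} = ∅ := by
        rw [hX0]
        simp
      rw [this, measure_empty, hν]
      simp [hp0]
    rcases Nat.eq_zero_or_pos m with rfl | hm
    · have : B ∩ A' ∩ X n ⁻¹' {i} ∩ X (n + 1) ⁻¹' {0} = ∅ := by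
        rw [hX0]
        simp
      rw [this, measure_empty, hν]
      simp [hp0]
    rw [hkey i m hi hm,
      measure_biUnion_finset (hGdisj i m hi hm) (fun T _ => hGmeas T i m)]
    have e : ∑ T ∈ (W.powersetCard j).filter (fun T => (m ≤ i ↔ d ∈ T)), P (G T i m)
        = ∑ _T ∈ (W.powersetCard j).filter (fun T => (m ≤ i ↔ d ∈ T)),
            (Pe i * Pe m * Se (max i m) ^ j * Ce (min i m) ^ (k - j)) := by
      refine Finset.sum_congr rfl (fun T hT => ?_)
      simp only [Finset.mem_filter, Finset.mem_powersetCard] at hT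
      exact hPG T i m hT.1.1 hT.1.2
    rw [e, Finset.sum_const, nsmul_eq_mul, hν]
    have hfil : (W.powersetCard j).filter (fun T => (m ≤ i ↔ d ∈ T))
        = if m ≤ i then (W.powersetCard j).filter (fun T => d ∈ T)
          else (W.powersetCard j).filter (fun T => d ∉ T) := by
      by_cases hmi : m ≤ i
      · rw [if_pos hmi]
        exact Finset.filter_congr (fun T _ => by simp [hmi])
      · rw [if_neg hmi]
        exact Finset.filter_congr (fun T _ => by simp [hmi])
    rw [hfil]
    by_cases hmi : m ≤ i
    · rw [if_pos hmi]
      simp only [if_pos hmi, hκ₁]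
    · rw [if_neg hmi]
      simp only [if_neg hmi, hκ₂]
  have hFmeas : ∀ im : ℕ × ℕ,
      MeasurableSet (B ∩ A' ∩ X n ⁻¹' {im.1} ∩ X (n + 1) ⁻¹' {im.2}) := by
    rintro ⟨i, m⟩
    rcases Nat.eq_zero_or_pos i with rfl | hi
    · simp only
      rw [hX0]
      simp only [Set.inter_empty, Set.empty_inter]
      exact MeasurableSet.empty
    rcases Nat.eq_zero_or_pos m with rfl | hm
    · simp only
      rw [hX0]
      simp only [Set.inter_empty]
      exact MeasurableSet.empty
    rw [hkey i m hi hm]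
    exact MeasurableSet.biUnion (Finset.countable_toSet _) (fun T _ => hGmeas T i m)
  have hBA : P (B ∩ A') = ∑' i : ℕ, ∑' m : ℕ, ν i m := by
    have hdecomp : B ∩ A' = ⋃ im : ℕ × ℕ,
        B ∩ A' ∩ X n ⁻¹' {im.1} ∩ X (n + 1) ⁻¹' {im.2} := by
      ext ω
      simp only [Set.mem_iUnion, Set.mem_inter_iff, Set.mem_preimage, Set.mem_singleton_iff]
      constructor
      · intro h
        exact ⟨(X n ω, X (n + 1) ω), ⟨⟨h, rfl⟩, rfl⟩⟩
      · rintro ⟨im, ⟨⟨h, _⟩, _⟩⟩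
        exact h
    have hFdisj : Pairwise (Function.onFun Disjoint (fun im : ℕ × ℕ =>
        B ∩ A' ∩ X n ⁻¹' {im.1} ∩ X (n + 1) ⁻¹' {im.2})) := by
      rintro ⟨i, m⟩ ⟨i', m'⟩ hne
      rw [Function.onFun, Set.disjoint_left]
      rintro ω ⟨⟨⟨_, h1⟩, h2⟩⟩ ⟨⟨_, h1'⟩, h2'⟩
      simp only [Set.mem_preimage, Set.mem_singleton_iff] at *
      apply hne
      simp only [Prod.mk.injEq]
      constructor <;> omega
    rw [hdecomp, measure_iUnion hFdisj hFmeas]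
    calc ∑' im : ℕ × ℕ, P (B ∩ A' ∩ X n ⁻¹' {im.1} ∩ X (n + 1) ⁻¹' {im.2})
        = ∑' im : ℕ × ℕ, ν im.1 im.2 := tsum_congr fun im => hνBA im.1 im.2
      _ = ∑' i : ℕ, ∑' m : ℕ, ν i m := ENNReal.tsum_prod
  -- per-i decomposition
  have hνi : ∀ i, P (B ∩ A' ∩ X n ⁻¹' {i}) = ∑' m, ν i m := by
    intro i
    have hdecomp : B ∩ A' ∩ X n ⁻¹' {i}
        = ⋃ m : ℕ, B ∩ A' ∩ X n ⁻¹' {i} ∩ X (n + 1) ⁻¹' {m} := by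
      ext ω
      simp only [Set.mem_iUnion, Set.mem_inter_iff, Set.mem_preimage, Set.mem_singleton_iff]
      constructor
      · intro h
        exact ⟨X (n + 1) ω, ⟨h, rfl⟩⟩
      · rintro ⟨m, ⟨h, _⟩⟩
        exact h
    have hdisj : Pairwise (Function.onFun Disjoint (fun m : ℕ =>
        B ∩ A' ∩ X n ⁻¹' {i} ∩ X (n + 1) ⁻¹' {m})) := by
      intro m m' hne
      rw [Function.onFun, Set.disjoint_left]
      rintro ω ⟨_, h2⟩ ⟨_, h2'⟩
      simp only [Set.mem_preimage, Set.mem_singleton_iff] at h2 h2'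
      exact hne (by omega)
    rw [hdecomp, measure_iUnion hdisj (fun m => hFmeas (i, m))]
    exact tsum_congr fun m => hνBA i m
  have hνfin : ∀ i, (∑' m, ν i m) ≠ ⊤ := by
    intro i
    rw [← hνi]
    exact measure_ne_top P _
  have hνmfin : ∀ i m, ν i m ≠ ⊤ :=
    fun i m => ne_top_of_le_ne_top (hνfin i) (ENNReal.le_tsum m)
  -- real-side preparations
  have hPBne : P B ≠ 0 := hBpos.ne'
  have hPBtop : P B ≠ ⊤ := measure_ne_top P B
  have hInvTop : (P B)⁻¹ ≠ ⊤ := ENNReal.inv_ne_top.2 hPBne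
  set ρ : ℝ := ((P B)⁻¹).toReal with hρ
  have hp0R : ∀ l, (0:ℝ) ≤ p l := fun l => by rw [hp' l]; exact ENNReal.toReal_nonneg
  have hS0R : ∀ a, (0:ℝ) ≤ S a := fun a => by rw [hS' a]; exact ENNReal.toReal_nonneg
  have hC0R : ∀ a, (0:ℝ) ≤ C a := fun a => by rw [hC a]; exact ENNReal.toReal_nonneg
  have hpSR : ∀ l, p l ≤ S l := by
    intro l
    rw [hp' l, hS' l]
    apply ENNReal.toReal_mono (measure_ne_top P _)
    apply measure_mono
    intro ω
    simp only [Set.mem_preimage, Set.mem_singleton_iff, Set.mem_Ici]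
    omega
  have hSantiR : ∀ a b, a ≤ b → S b ≤ S a := by
    intro a b hab
    rw [hS' a, hS' b]
    apply ENNReal.toReal_mono (measure_ne_top P _)
    apply measure_mono
    intro ω
    simp only [Set.mem_preimage, Set.mem_Ici]
    omega
  have hCmonoR : ∀ a b, a ≤ b → C a ≤ C b := by
    intro a b hab
    rw [hC a, hC b]
    apply ENNReal.toReal_mono (measure_ne_top P _)
    apply measure_mono
    intro ω
    simp only [Set.mem_setOf_eq]
    omega
  have hSummp : Summable p := by
    have huniv : (⋃ l : ℕ, X 1 ⁻¹' {l}) = Set.univ := by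
      ext ω
      simp only [Set.mem_iUnion, Set.mem_preimage, Set.mem_singleton_iff, Set.mem_univ,
        iff_true]
      exact ⟨X 1 ω, rfl⟩
    have hdisj : Pairwise (Function.onFun Disjoint (fun l : ℕ => X 1 ⁻¹' {l})) := by
      intro a b hne
      rw [Function.onFun, Set.disjoint_left]
      intro ω h1 h2
      simp only [Set.mem_preimage, Set.mem_singleton_iff] at h1 h2
      exact hne (by omega)
    have htsumPe : (∑' l, Pe l) ≠ ⊤ := by
      simp only [hPe]
      rw [← measure_iUnion hdisj (fun l => (hXmeas 1) (.of_discrete)), huniv]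
      exact measure_ne_top P _
    have := ENNReal.summable_toReal htsumPe
    exact this.congr fun l => (hp' l).symm
  have hp00 : p 0 = 0 := by rw [hp' 0, hp0]; rfl
  -- conditional probability
  have hcond : (P[|B]) A' = (P B)⁻¹ * P (B ∩ A') := cond_apply hBmeas P A'
  have hqval : ∀ i, q i = ρ * ((k.choose j : ℝ)
      * (p i * S i ^ j * C (i - 1) ^ (k - j))) := by
    intro i
    have hset : {ω | X n ω = i} = X n ⁻¹' {i} := rfl
    rw [hq i, hset, cond_apply hBmeas P _, hPBi i]
    rw [ENNReal.toReal_mul, ENNReal.toReal_mul]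
    congr 1
    rw [ENNReal.toReal_mul, ENNReal.toReal_mul, ENNReal.toReal_pow, ENNReal.toReal_pow]
    rw [ENNReal.toReal_natCast, hp' i, hS' i, hC' i]
  -- the per-i real identity
  have hperi : ∀ i : ℕ, ((P B)⁻¹ * ∑' m, ν i m).toReal
      = if 1 ≤ i then
          q i * (((j : ℝ) / k) * p i
            + (∑' m : ℕ, if i < m then p m * (S m / S i) ^ j * (((k : ℝ) - j) / k) else 0)
            + ∑ m ∈ Finset.Ico 1 i, p m * (C (m - 1) / C (i - 1)) ^ (k - j) * ((j : ℝ) / k))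
        else 0 := by
    intro i
    have hrirw : ∀ m, (ν i m).toReal = (if m ≤ i then (κ₁ : ℝ) else κ₂)
        * (p i * p m * S (max i m) ^ j * C (min i m - 1) ^ (k - j)) := by
      intro m
      rw [hν]
      simp only
      rw [ENNReal.toReal_mul, ENNReal.toReal_mul, ENNReal.toReal_mul, ENNReal.toReal_mul,
        ENNReal.toReal_pow, ENNReal.toReal_pow, hp' i, hp' m, hS' (max i m), hC' (min i m)]
      congr 1
      split
      · exact ENNReal.toReal_natCast κ₁
      · exact ENNReal.toReal_natCast κ₂
    rcases Nat.eq_zero_or_pos i with rfl | hi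
    · rw [if_neg (by omega)]
      have : ∀ m, ν 0 m = 0 := by
        intro m
        rw [hν]
        simp [hp0]
      rw [tsum_congr this, tsum_zero, mul_zero]
      exact ENNReal.toReal_zero
    have hi' : 1 ≤ i := hi
    rw [if_pos hi']
    rw [ENNReal.toReal_mul, ← hρ, ENNReal.tsum_toReal_eq (fun m => hνmfin i m)]
    by_cases hPei : Pe i = 0
    · -- degenerate case : p i = 0
      have hpi0 : p i = 0 := by rw [hp' i, hPei]; rfl
      have hν0 : ∀ m, (ν i m).toReal = 0 := by
        intro m
        rw [hrirw m, hpi0]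
        ring
      rw [tsum_congr hν0, tsum_zero, mul_zero, hqval i, hpi0]
      ring
    · -- main case : apply the core computation
      have hpi : 0 < p i := by
        rw [hp' i]
        exact ENNReal.toReal_pos hPei (hPe_ne i)
      exact core_calc k j i hk hj hi p S C hp0R hpSR hSantiR hCmonoR hC0R hS0R hSummp hp00
        κ₁ κ₂ hκ₁k hκ₂k (fun m => (ν i m).toReal) hrirw
        (ENNReal.summable_toReal (hνfin i)) hpi ρ (q i) (hqval i)
  -- final assembly
  calc ((P[|B]) A').toReal
      = ((P B)⁻¹ * P (B ∩ A')).toReal := by rw [hcond]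
    _ = ((P B)⁻¹ * ∑' i : ℕ, ∑' m : ℕ, ν i m).toReal := by rw [hBA]
    _ = (∑' i : ℕ, (P B)⁻¹ * ∑' m : ℕ, ν i m).toReal := by rw [ENNReal.tsum_mul_left]
    _ = ∑' i : ℕ, ((P B)⁻¹ * ∑' m : ℕ, ν i m).toReal :=
        ENNReal.tsum_toReal_eq (fun i => ENNReal.mul_ne_top hInvTop (hνfin i))
    _ = _ := tsum_congr hperi
end

section
/- For every integer m with 1 ≤ m ≤ k and every i ≥ 1, E(ξ_i ξ_{i+m}) = Σ_{t = max(0, j-m)}^{min(k-m, j-1)} binom(m, j-t) · binom(m-1, j-t-1) · binom(k-m, t) · S_{i_0}^{2j-t-1} · (1 - S_{i_0})^{k+m-2j+t} · p_{i_0}^2 (the sum being empty, hence 0, when max(0, j-m) > min(k-m, j-1)). -/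
open MeasureTheory ProbabilityTheory

/-- For `1 ≤ m ≤ k` and `i ≥ 1`,
`E(ξᵢ ξ_{i+m}) = ∑_{t = max(0, j-m)}^{min(k-m, j-1)} C(m, j-t) C(m-1, j-t-1) C(k-m, t)
  S_{i₀}^{2j-t-1} (1 - S_{i₀})^{k+m-2j+t} p_{i₀}²`
(the sum over the integer interval is empty when the lower bound exceeds the upper bound). -/
theorem recent_k_record_xi_overlap
    (k j : ℕ) (hk : 1 ≤ k) (hj : j ≤ k)
    {Ω : Type*} [MeasurableSpace Ω] (P : Measure Ω) [IsProbabilityMeasure P]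
    (X : ℕ → Ω → ℕ) (hXmeas : ∀ a, Measurable (X a))
    (hXpos : ∀ a ω, 1 ≤ X a ω)
    (hindep : iIndepFun X P)
    (hident : ∀ a, IdentDistrib (X a) (X 1) P P)
    (p S : ℕ → ℝ)
    (hp : ∀ l, p l = (P {ω | X 1 ω = l}).toReal)
    (hS : ∀ i, S i = (P {ω | i ≤ X 1 ω}).toReal)
    (i₀ : ℕ) (hi₀ : 1 ≤ i₀)
    (E : ℕ → Set Ω)
    (hE : ∀ a, E a = {ω | X (a + k) ω = i₀ ∧
      ((Finset.Ico a (a + k)).filter fun t => i₀ ≤ X t ω).card = j})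
    (ξ : ℕ → Ω → ℝ) (hξ : ∀ a, ξ a = (E a).indicator 1)
    (m : ℕ) (hm1 : 1 ≤ m) (hmk : m ≤ k) (i : ℕ) (hi : 1 ≤ i) :
    ∫ ω, ξ i ω * ξ (i + m) ω ∂P
      = ∑ t ∈ Finset.Icc (max 0 ((j : ℤ) - (m : ℤ))) (min ((k : ℤ) - (m : ℤ)) ((j : ℤ) - 1)),
          (m.choose (j - t.toNat) : ℝ) * ((m - 1).choose (j - t.toNat - 1) : ℝ)
            * ((k - m).choose t.toNat : ℝ)
            * S i₀ ^ (2 * j - t.toNat - 1) * (1 - S i₀) ^ (k + m + t.toNat - 2 * j)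
            * p i₀ ^ 2 := by
  classical
  set P₁ : Finset ℕ := Finset.Ico i (i + m) with hP₁
  set T : Finset ℕ := Finset.Ico (i + m) (i + k) with hT
  set P₂ : Finset ℕ := Finset.Ico (i + k + 1) (i + k + m) with hP₂
  set I' : Finset ℕ := P₁ ∪ T ∪ P₂ with hI'
  set W₁ : Finset ℕ := Finset.Ico i (i + k) with hW₁
  set W₂ : Finset ℕ := T ∪ P₂ with hW₂
  set J : Finset ℕ := insert (i + k) (insert (i + k + m) I') with hJ
  clear_value P₁ T P₂ I' W₁ W₂ J
  -- membership characterizations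
  have memP₁ : ∀ x, x ∈ P₁ ↔ i ≤ x ∧ x < i + m := by
    intro x; rw [hP₁, Finset.mem_Ico]
  have memT : ∀ x, x ∈ T ↔ i + m ≤ x ∧ x < i + k := by
    intro x; rw [hT, Finset.mem_Ico]
  have memP₂ : ∀ x, x ∈ P₂ ↔ i + k + 1 ≤ x ∧ x < i + k + m := by
    intro x; rw [hP₂, Finset.mem_Ico]
  have memI' : ∀ x, x ∈ I' ↔ i ≤ x ∧ x < i + k + m ∧ x ≠ i + k := by
    intro x
    rw [hI', Finset.mem_union, Finset.mem_union, memP₁, memT, memP₂]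
    omega
  have memW₁ : ∀ x, x ∈ W₁ ↔ i ≤ x ∧ x < i + k := by
    intro x; rw [hW₁, Finset.mem_Ico]
  have memW₂ : ∀ x, x ∈ W₂ ↔ i + m ≤ x ∧ x < i + k + m ∧ x ≠ i + k := by
    intro x
    rw [hW₂, Finset.mem_union, memT, memP₂]
    omega
  have memJ : ∀ x, x ∈ J ↔ i ≤ x ∧ x ≤ i + k + m := by
    intro x
    rw [hJ, Finset.mem_insert, Finset.mem_insert, memI']
    omega
  -- cards and disjointness
  have cardP₁ : P₁.card = m := by rw [hP₁, Nat.card_Ico]; omega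
  have cardT : T.card = k - m := by rw [hT, Nat.card_Ico]; omega
  have cardP₂ : P₂.card = m - 1 := by rw [hP₂, Nat.card_Ico]; omega
  have hd₁₂ : Disjoint P₁ T := by
    rw [Finset.disjoint_left]
    intro x hx hx'
    rw [memP₁] at hx; rw [memT] at hx'; omega
  have hd₁₃ : Disjoint P₁ P₂ := by
    rw [Finset.disjoint_left]
    intro x hx hx'
    rw [memP₁] at hx; rw [memP₂] at hx'; omega
  have hd₂₃ : Disjoint T P₂ := by
    rw [Finset.disjoint_left]
    intro x hx hx'
    rw [memT] at hx; rw [memP₂] at hx'; omega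
  have cardI' : I'.card = k + m - 1 := by
    rw [hI', Finset.card_union_of_disjoint, Finset.card_union_of_disjoint hd₁₂,
      cardP₁, cardT, cardP₂]
    · omega
    · exact Finset.disjoint_union_left.2 ⟨hd₁₃, hd₂₃⟩
  -- basic one-coordinate probabilities
  have hpre : ∀ (a : ℕ) (s : Set ℕ), P (X a ⁻¹' s) = P (X 1 ⁻¹' s) := by
    intro a s
    exact (hident a).measure_mem_eq .of_discrete
  have hμp : (P (X 1 ⁻¹' {i₀})).toReal = p i₀ := by
    rw [hp]; rfl
  have hμS : (P (X 1 ⁻¹' Set.Ici i₀)).toReal = S i₀ := by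
    rw [hS]; rfl
  have hμq : (P (X 1 ⁻¹' Set.Iio i₀)).toReal = 1 - S i₀ := by
    have h1 : X 1 ⁻¹' Set.Iio i₀ = (X 1 ⁻¹' Set.Ici i₀)ᶜ := by
      ext ω; simp
    rw [h1, prob_compl_eq_one_sub (hXmeas 1 .of_discrete),
      ENNReal.toReal_sub_of_le prob_le_one ENNReal.one_ne_top, ENNReal.toReal_one, hμS]
  -- the elementary events
  set C : Finset ℕ → ℕ → Set ℕ := fun F idx =>
    if idx = i + k ∨ idx = i + k + m then {i₀}
    else if idx ∈ F then Set.Ici i₀ else Set.Iio i₀ with hC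
  set A : Finset ℕ → Set Ω := fun F => ⋂ idx ∈ J, X idx ⁻¹' C F idx with hA
  set 𝔽 : Finset (Finset ℕ) :=
    I'.powerset.filter (fun F => (F ∩ W₁).card = j ∧ (F ∩ W₂).card + 1 = j) with h𝔽
  clear_value C A 𝔽
  have mem𝔽 : ∀ F, F ∈ 𝔽 ↔ F ⊆ I' ∧ (F ∩ W₁).card = j ∧ (F ∩ W₂).card + 1 = j := by
    intro F
    rw [h𝔽, Finset.mem_filter, Finset.mem_powerset]
  have memA : ∀ F ω, ω ∈ A F ↔ ∀ idx ∈ J, X idx ω ∈ C F idx := by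
    intro F ω
    rw [hA]
    simp only [Set.mem_iInter, Set.mem_preimage]
  have hameas : ∀ F, MeasurableSet (A F) := by
    intro F
    rw [hA]
    exact Finset.measurableSet_biInter _ (fun idx _ => hXmeas idx .of_discrete)
  have hki : i + k ∉ I' := by rw [memI']; omega
  have hkmi : i + k + m ∉ I' := by rw [memI']; omega
  -- probability of an elementary event
  have hPA : ∀ F, F ⊆ I' →
      (P (A F)).toReal = S i₀ ^ F.card * (1 - S i₀) ^ (k + m - 1 - F.card) * p i₀ ^ 2 := by
    intro F hF
    have h1 : P (A F) = ∏ idx ∈ J, P (X idx ⁻¹' C F idx) := by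
      rw [hA]
      exact hindep.meas_biInter (fun idx _ => ⟨C F idx, .of_discrete, rfl⟩)
    rw [h1, ENNReal.toReal_prod]
    have h2 : ∀ idx ∈ J, (P (X idx ⁻¹' C F idx)).toReal = (P (X 1 ⁻¹' C F idx)).toReal := by
      intro idx _; rw [hpre]
    rw [Finset.prod_congr rfl h2, hJ,
      Finset.prod_insert (by
        rw [Finset.mem_insert]; push_neg; exact ⟨by omega, hki⟩),
      Finset.prod_insert hkmi]
    have hCk : C F (i + k) = {i₀} := by rw [hC]; exact if_pos (Or.inl rfl)
    have hCkm : C F (i + k + m) = {i₀} := by rw [hC]; exact if_pos (Or.inr rfl)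
    rw [hCk, hCkm, hμp]
    have h3 : ∀ idx ∈ I', (P (X 1 ⁻¹' C F idx)).toReal
        = (if idx ∈ F then S i₀ else 1 - S i₀) := by
      intro idx hidx
      have hne : ¬(idx = i + k ∨ idx = i + k + m) := by
        rw [memI'] at hidx; omega
      simp only [hC]
      simp only [if_neg hne]
      by_cases hmem : idx ∈ F
      · rw [if_pos hmem, if_pos hmem, hμS]
      · rw [if_neg hmem, if_neg hmem, hμq]
    rw [Finset.prod_congr rfl h3, ← Finset.union_sdiff_of_subset hF,
      Finset.prod_union Finset.disjoint_sdiff,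
      Finset.prod_congr rfl (fun x hx => if_pos hx),
      Finset.prod_congr rfl (fun x (hx : x ∈ I' \ F) => if_neg (Finset.mem_sdiff.1 hx).2),
      Finset.prod_const, Finset.prod_const, Finset.card_sdiff_of_subset hF, cardI']
    ring
  -- the event decomposition
  have hEeq : E i ∩ E (i + m) = ⋃ F ∈ 𝔽, A F := by
    ext ω
    simp only [Set.mem_inter_iff, hE, Set.mem_setOf_eq, Set.mem_iUnion, exists_prop]
    have hkm : i + m + k = i + k + m := by omega
    have hsplit : Finset.Ico (i + m) (i + k + m) = insert (i + k) W₂ := by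
      ext x
      rw [Finset.mem_Ico, Finset.mem_insert, memW₂]
      omega
    have hW₁I : W₁ ⊆ I' := by
      intro x hx; rw [memW₁] at hx; rw [memI']; omega
    have hW₂I : W₂ ⊆ I' := by
      intro x hx; rw [memW₂] at hx; rw [memI']; omega
    have hkW₂ : i + k ∉ W₂ := by rw [memW₂]; omega
    constructor
    · rintro ⟨⟨hx1, hc1⟩, hx2, hc2⟩
      rw [hkm] at hx2 hc2
      have hFsub : I'.filter (fun x => i₀ ≤ X x ω) ⊆ I' := Finset.filter_subset _ _
      refine ⟨I'.filter (fun x => i₀ ≤ X x ω), ?_, ?_⟩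
      · rw [mem𝔽]
        refine ⟨hFsub, ?_, ?_⟩
        · have e1 : I'.filter (fun x => i₀ ≤ X x ω) ∩ W₁
              = W₁.filter (fun x => i₀ ≤ X x ω) := by
            ext x
            simp only [Finset.mem_inter, Finset.mem_filter]
            exact ⟨fun h => ⟨h.2, h.1.2⟩, fun h => ⟨⟨hW₁I h.1, h.2⟩, h.1⟩⟩
          rw [e1, hW₁]
          exact hc1
        · have e2 : I'.filter (fun x => i₀ ≤ X x ω) ∩ W₂
              = W₂.filter (fun x => i₀ ≤ X x ω) := by
            ext x
            simp only [Finset.mem_inter, Finset.mem_filter]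
            exact ⟨fun h => ⟨h.2, h.1.2⟩, fun h => ⟨⟨hW₂I h.1, h.2⟩, h.1⟩⟩
          rw [hsplit, Finset.filter_insert, if_pos (hx1 ▸ le_refl i₀)] at hc2
          rw [Finset.card_insert_of_notMem
            (fun hmem => hkW₂ (Finset.filter_subset _ _ hmem))] at hc2
          rw [e2]
          exact hc2
      · rw [memA]
        intro idx hidx
        rw [hJ, Finset.mem_insert, Finset.mem_insert] at hidx
        rcases hidx with h | h | h
        · subst h
          simp only [hC, eq_self_iff_true, true_or, or_true, if_true]
          exact hx1
        · subst h
          simp only [hC, eq_self_iff_true, true_or, or_true, if_true]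
          exact hx2
        · have hne : ¬(idx = i + k ∨ idx = i + k + m) := by
            rw [memI'] at h; omega
          simp only [hC]
          simp only [if_neg hne]
          by_cases hmem : idx ∈ I'.filter (fun x => i₀ ≤ X x ω)
          · rw [if_pos hmem]
            exact (Finset.mem_filter.1 hmem).2
          · rw [if_neg hmem]
            have : ¬ i₀ ≤ X idx ω := fun hle => hmem (Finset.mem_filter.2 ⟨h, hle⟩)
            exact Set.mem_Iio.2 (by omega)
    · rintro ⟨F, hF𝔽, hωA⟩
      obtain ⟨hFsub, hcard1, hcard2⟩ := (mem𝔽 F).1 hF𝔽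
      have hmem := (memA F ω).1 hωA
      have hx1 : X (i + k) ω = i₀ := by
        have h := hmem (i + k) ((memJ _).2 (by omega))
        simp only [hC, eq_self_iff_true, true_or, or_true, if_true] at h
        exact h
      have hx2 : X (i + k + m) ω = i₀ := by
        have h := hmem (i + k + m) ((memJ _).2 (by omega))
        simp only [hC, eq_self_iff_true, true_or, or_true, if_true] at h
        exact h
      have hiff : ∀ x ∈ I', (i₀ ≤ X x ω ↔ x ∈ F) := by
        intro x hx
        have hne : ¬(x = i + k ∨ x = i + k + m) := by
          rw [memI'] at hx; omega
        have h := hmem x ((memJ _).2 (by rw [memI'] at hx; omega))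
        simp only [hC] at h
        simp only [if_neg hne] at h
        by_cases hxF : x ∈ F
        · rw [if_pos hxF] at h
          exact ⟨fun _ => hxF, fun _ => h⟩
        · rw [if_neg hxF] at h
          rw [Set.mem_Iio] at h
          exact ⟨fun hle => absurd hxF (by omega), fun hc => absurd hc hxF⟩
      have e1 : W₁.filter (fun x => i₀ ≤ X x ω) = F ∩ W₁ := by
        ext x
        rw [Finset.mem_inter, Finset.mem_filter]
        constructor
        · rintro ⟨hw, hle⟩
          exact ⟨(hiff x (hW₁I hw)).1 hle, hw⟩
        · rintro ⟨hf, hw⟩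
          exact ⟨hw, (hiff x (hW₁I hw)).2 hf⟩
      have e2 : W₂.filter (fun x => i₀ ≤ X x ω) = F ∩ W₂ := by
        ext x
        rw [Finset.mem_inter, Finset.mem_filter]
        constructor
        · rintro ⟨hw, hle⟩
          exact ⟨(hiff x (hW₂I hw)).1 hle, hw⟩
        · rintro ⟨hf, hw⟩
          exact ⟨hw, (hiff x (hW₂I hw)).2 hf⟩
      refine ⟨⟨hx1, ?_⟩, ?_, ?_⟩
      · rw [← hW₁] at *
        rw [e1]
        exact hcard1
      · rw [hkm]; exact hx2
      · rw [hkm, hsplit, Finset.filter_insert, if_pos (hx1 ▸ le_refl i₀),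
          Finset.card_insert_of_notMem
            (fun hmem' => hkW₂ (Finset.filter_subset _ _ hmem')), e2]
        exact hcard2
  -- pairwise disjointness
  have hpd : (↑𝔽 : Set (Finset ℕ)).PairwiseDisjoint A := by
    intro F hF G hG hFG
    have hFsub : F ⊆ I' := ((mem𝔽 F).1 (Finset.mem_coe.1 hF)).1
    have hGsub : G ⊆ I' := ((mem𝔽 G).1 (Finset.mem_coe.1 hG)).1
    obtain ⟨x, hxI, hxne⟩ : ∃ x ∈ I', ¬(x ∈ F ↔ x ∈ G) := by
      by_contra hcon
      push_neg at hcon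
      refine hFG (Finset.ext fun x => ?_)
      by_cases hx : x ∈ I'
      · exact hcon x hx
      · exact ⟨fun hxf => absurd (hFsub hxf) hx, fun hxg => absurd (hGsub hxg) hx⟩
    have hne : ¬(x = i + k ∨ x = i + k + m) := by
      rw [memI'] at hxI; omega
    have hxJ : x ∈ J := (memJ x).2 (by rw [memI'] at hxI; omega)
    rw [Function.onFun, Set.disjoint_left]
    intro ω hωF hωG
    have h1 := (memA F ω).1 hωF x hxJ
    have h2 := (memA G ω).1 hωG x hxJ
    simp only [hC] at h1 h2
    simp only [if_neg hne] at h1 h2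
    by_cases hxF : x ∈ F <;> by_cases hxG : x ∈ G
    · exact hxne ⟨fun _ => hxG, fun _ => hxF⟩
    · rw [if_pos hxF] at h1; rw [if_neg hxG] at h2
      rw [Set.mem_Ici] at h1; rw [Set.mem_Iio] at h2; omega
    · rw [if_neg hxF] at h1; rw [if_pos hxG] at h2
      rw [Set.mem_Iio] at h1; rw [Set.mem_Ici] at h2; omega
    · exact hxne ⟨fun h => absurd h hxF, fun h => absurd h hxG⟩
  -- the integral as a finite sum
  have key : ∫ ω, ξ i ω * ξ (i + m) ω ∂P = ∑ F ∈ 𝔽, (P (A F)).toReal := by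
    have hfun : (fun ω => ξ i ω * ξ (i + m) ω) = (E i ∩ E (i + m)).indicator 1 := by
      funext ω
      rw [hξ i, hξ (i + m), Set.inter_indicator_one]
      rfl
    have hmeas : MeasurableSet (E i ∩ E (i + m)) := by
      rw [hEeq]
      exact 𝔽.measurableSet_biUnion (fun F _ => hameas F)
    rw [hfun, MeasureTheory.integral_indicator_one hmeas, measureReal_def, hEeq,
      measure_biUnion_finset hpd (fun F _ => hameas F),
      ENNReal.toReal_sum (fun F _ => measure_ne_top P _)]
  -- abbreviation for the summand
  set f : ℕ → ℝ := fun n =>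
    (m.choose (j - n) : ℝ) * ((m - 1).choose (j - n - 1) : ℝ) * ((k - m).choose n : ℝ)
      * S i₀ ^ (2 * j - n - 1) * (1 - S i₀) ^ (k + m + n - 2 * j) * p i₀ ^ 2 with hf
  clear_value f
  -- combinatorial grouping
  have step2 : ∑ F ∈ 𝔽, S i₀ ^ F.card * (1 - S i₀) ^ (k + m - 1 - F.card) * p i₀ ^ 2
      = ∑ t ∈ Finset.range j, f t := by
    have hmapsto : ∀ F ∈ 𝔽, (F ∩ T).card ∈ Finset.range j := by
      intro F hF
      obtain ⟨hFsub, hcard1, hcard2⟩ := (mem𝔽 F).1 hF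
      have hsub : F ∩ T ⊆ F ∩ W₂ := by
        apply Finset.inter_subset_inter_left
        rw [hW₂]; exact Finset.subset_union_left
      have := Finset.card_le_card hsub
      rw [Finset.mem_range]; omega
    rw [← Finset.sum_fiberwise_of_maps_to hmapsto
      (fun F => S i₀ ^ F.card * (1 - S i₀) ^ (k + m - 1 - F.card) * p i₀ ^ 2)]
    refine Finset.sum_congr rfl fun t ht => ?_
    have hts : t < j := Finset.mem_range.1 ht
    -- properties of the fiber elements
    have hfib : ∀ F ∈ 𝔽.filter (fun F => (F ∩ T).card = t),
        F ⊆ I' ∧ (F ∩ P₁).card = j - t ∧ (F ∩ T).card = t ∧ (F ∩ P₂).card = j - t - 1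
          ∧ F.card = 2 * j - t - 1 := by
      intro F hF
      rw [Finset.mem_filter] at hF
      obtain ⟨hF𝔽, h3⟩ := hF
      obtain ⟨hFsub, h1, h2⟩ := (mem𝔽 F).1 hF𝔽
      have eW₁ : W₁ = P₁ ∪ T := by
        rw [hW₁, hP₁, hT]
        exact (Finset.Ico_union_Ico_eq_Ico (by omega) (by omega)).symm
      have d₁ : Disjoint (F ∩ P₁) (F ∩ T) :=
        hd₁₂.mono Finset.inter_subset_right Finset.inter_subset_right
      have d₂ : Disjoint (F ∩ T) (F ∩ P₂) :=
        hd₂₃.mono Finset.inter_subset_right Finset.inter_subset_right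
      have d₃ : Disjoint (F ∩ P₁) (F ∩ (T ∪ P₂)) := by
        refine Disjoint.mono Finset.inter_subset_right Finset.inter_subset_right ?_
        exact Finset.disjoint_union_right.2 ⟨hd₁₂, hd₁₃⟩
      have c₁ : (F ∩ P₁).card + t = j := by
        rw [← h3, ← Finset.card_union_of_disjoint d₁, ← Finset.inter_union_distrib_left,
          ← eW₁, h1]
      have c₂ : t + (F ∩ P₂).card + 1 = j := by
        rw [← h3, ← h2, ← Finset.card_union_of_disjoint d₂,
          ← Finset.inter_union_distrib_left, ← hW₂]
      have c₃ : F.card = (F ∩ P₁).card + ((F ∩ T).card + (F ∩ P₂).card) := by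
        conv_lhs => rw [← Finset.inter_eq_left.2 hFsub]
        rw [hI', Finset.union_assoc, Finset.inter_union_distrib_left,
          Finset.card_union_of_disjoint d₃, Finset.inter_union_distrib_left,
          Finset.card_union_of_disjoint d₂]
      exact ⟨hFsub, by omega, h3, by omega, by omega⟩
    by_cases hcase : j ≤ m + t ∧ t ≤ k - m
    · -- the fiber sum is constant; count the fiber
      have hconst : ∀ F ∈ 𝔽.filter (fun F => (F ∩ T).card = t),
          S i₀ ^ F.card * (1 - S i₀) ^ (k + m - 1 - F.card) * p i₀ ^ 2
            = S i₀ ^ (2 * j - t - 1) * (1 - S i₀) ^ (k + m + t - 2 * j) * p i₀ ^ 2 := by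
        intro F hF
        rw [(hfib F hF).2.2.2.2,
          (by omega : k + m - 1 - (2 * j - t - 1) = k + m + t - 2 * j)]
      rw [Finset.sum_congr rfl hconst, Finset.sum_const]
      have hcard : (𝔽.filter (fun F => (F ∩ T).card = t)).card
          = m.choose (j - t) * ((k - m).choose t * (m - 1).choose (j - t - 1)) := by
        have hbij : (𝔽.filter (fun F => (F ∩ T).card = t)).card
            = ((P₁.powersetCard (j - t)) ×ˢ
                ((T.powersetCard t) ×ˢ (P₂.powersetCard (j - t - 1)))).card := by
          refine Finset.card_bij' (fun F _ => (F ∩ P₁, (F ∩ T, F ∩ P₂)))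
            (fun pr _ => pr.1 ∪ (pr.2.1 ∪ pr.2.2)) ?_ ?_ ?_ ?_
          · intro F hF
            obtain ⟨hFsub, e₁, e₂, e₃, _⟩ := hfib F hF
            simp only [Finset.mem_product, Finset.mem_powersetCard]
            exact ⟨⟨Finset.inter_subset_right, e₁⟩, ⟨Finset.inter_subset_right, e₂⟩,
              ⟨Finset.inter_subset_right, e₃⟩⟩
          · rintro ⟨a, b, c⟩ hpr
            simp only [Finset.mem_product, Finset.mem_powersetCard] at hpr
            obtain ⟨⟨ha, hacard⟩, ⟨hb, hbcard⟩, ⟨hc, hccard⟩⟩ := hpr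
            have hGsub : a ∪ (b ∪ c) ⊆ I' := by
              intro x hx
              rw [Finset.mem_union, Finset.mem_union] at hx
              rw [memI']
              rcases hx with hx | hx | hx
              · have := (memP₁ x).1 (ha hx); omega
              · have := (memT x).1 (hb hx); omega
              · have := (memP₂ x).1 (hc hx); omega
            have eab : (a ∪ (b ∪ c)) ∩ W₁ = a ∪ b := by
              ext x
              rw [Finset.mem_inter, Finset.mem_union, Finset.mem_union, Finset.mem_union,
                memW₁]
              constructor
              · rintro ⟨hx | hx | hx, hw⟩
                · exact Or.inl hx
                · exact Or.inr hx
                · have := (memP₂ x).1 (hc hx); omega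
              · rintro (hx | hx)
                · have := (memP₁ x).1 (ha hx)
                  exact ⟨Or.inl hx, by omega⟩
                · have := (memT x).1 (hb hx)
                  exact ⟨Or.inr (Or.inl hx), by omega⟩
            have ebc : (a ∪ (b ∪ c)) ∩ W₂ = b ∪ c := by
              ext x
              rw [Finset.mem_inter, Finset.mem_union, Finset.mem_union, memW₂]
              constructor
              · rintro ⟨hx | hx | hx, hw⟩
                · have := (memP₁ x).1 (ha hx); omega
                · exact Or.inl hx
                · exact Or.inr hx
              · rintro (hx | hx)
                · have := (memT x).1 (hb hx)
                  exact ⟨Or.inr (Or.inl hx), by omega⟩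
                · have := (memP₂ x).1 (hc hx)
                  exact ⟨Or.inr (Or.inr hx), by omega⟩
            have eb : (a ∪ (b ∪ c)) ∩ T = b := by
              ext x
              rw [Finset.mem_inter, Finset.mem_union, Finset.mem_union]
              constructor
              · rintro ⟨hx | hx | hx, hw⟩
                · have h1 := (memP₁ x).1 (ha hx)
                  have h2 := (memT x).1 hw; omega
                · exact hx
                · have h1 := (memP₂ x).1 (hc hx)
                  have h2 := (memT x).1 hw; omega
              · intro hx
                exact ⟨Or.inr (Or.inl hx), hb hx⟩
            have dab : Disjoint a b := hd₁₂.mono ha hb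
            have dbc : Disjoint b c := hd₂₃.mono hb hc
            rw [Finset.mem_filter, mem𝔽]
            refine ⟨⟨hGsub, ?_, ?_⟩, ?_⟩
            · rw [eab, Finset.card_union_of_disjoint dab, hacard, hbcard]; omega
            · rw [ebc, Finset.card_union_of_disjoint dbc, hbcard, hccard]; omega
            · rw [eb]; exact hbcard
          · intro F hF
            obtain ⟨hFsub, _, _, _, _⟩ := hfib F hF
            ext x
            rw [Finset.mem_union, Finset.mem_union, Finset.mem_inter, Finset.mem_inter,
              Finset.mem_inter]
            constructor
            · rintro (⟨hx, _⟩ | ⟨hx, _⟩ | ⟨hx, _⟩) <;> exact hx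
            · intro hx
              have := (memI' x).1 (hFsub hx)
              have hsplit := (memI' x).1 (hFsub hx)
              by_cases h1 : x < i + m
              · exact Or.inl ⟨hx, (memP₁ x).2 (by omega)⟩
              · by_cases h2 : x < i + k
                · exact Or.inr (Or.inl ⟨hx, (memT x).2 (by omega)⟩)
                · exact Or.inr (Or.inr ⟨hx, (memP₂ x).2 (by omega)⟩)
          · rintro ⟨a, b, c⟩ hpr
            simp only [Finset.mem_product, Finset.mem_powersetCard] at hpr
            obtain ⟨⟨ha, _⟩, ⟨hb, _⟩, ⟨hc, _⟩⟩ := hpr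
            have ea : (a ∪ (b ∪ c)) ∩ P₁ = a := by
              ext x
              rw [Finset.mem_inter, Finset.mem_union, Finset.mem_union]
              constructor
              · rintro ⟨hx | hx | hx, hw⟩
                · exact hx
                · have h1 := (memT x).1 (hb hx)
                  have h2 := (memP₁ x).1 hw; omega
                · have h1 := (memP₂ x).1 (hc hx)
                  have h2 := (memP₁ x).1 hw; omega
              · intro hx
                exact ⟨Or.inl hx, ha hx⟩
            have eb : (a ∪ (b ∪ c)) ∩ T = b := by
              ext x
              rw [Finset.mem_inter, Finset.mem_union, Finset.mem_union]
              constructor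
              · rintro ⟨hx | hx | hx, hw⟩
                · have h1 := (memP₁ x).1 (ha hx)
                  have h2 := (memT x).1 hw; omega
                · exact hx
                · have h1 := (memP₂ x).1 (hc hx)
                  have h2 := (memT x).1 hw; omega
              · intro hx
                exact ⟨Or.inr (Or.inl hx), hb hx⟩
            have ec : (a ∪ (b ∪ c)) ∩ P₂ = c := by
              ext x
              rw [Finset.mem_inter, Finset.mem_union, Finset.mem_union]
              constructor
              · rintro ⟨hx | hx | hx, hw⟩
                · have h1 := (memP₁ x).1 (ha hx)
                  have h2 := (memP₂ x).1 hw; omega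
                · have h1 := (memT x).1 (hb hx)
                  have h2 := (memP₂ x).1 hw; omega
                · exact hx
              · intro hx
                exact ⟨Or.inr (Or.inr hx), hc hx⟩
            show ((a ∪ (b ∪ c)) ∩ P₁, ((a ∪ (b ∪ c)) ∩ T, (a ∪ (b ∪ c)) ∩ P₂)) = (a, b, c)
            rw [ea, eb, ec]
        rw [hbij, Finset.card_product, Finset.card_product,
          Finset.card_powersetCard, Finset.card_powersetCard, Finset.card_powersetCard,
          cardP₁, cardT, cardP₂]
      rw [hcard]
      simp only [hf, nsmul_eq_mul, Nat.cast_mul]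
      ring
    · -- empty fiber, vanishing binomial coefficient
      have hempty : 𝔽.filter (fun F => (F ∩ T).card = t) = ∅ := by
        rw [Finset.filter_eq_empty_iff]
        intro F hF𝔽 h3
        have hF : F ∈ 𝔽.filter (fun F => (F ∩ T).card = t) :=
          Finset.mem_filter.2 ⟨hF𝔽, h3⟩
        obtain ⟨hFsub, e₁, e₂, _, _⟩ := hfib F hF
        have h4 : (F ∩ P₁).card ≤ m := by
          rw [← cardP₁]
          exact Finset.card_le_card Finset.inter_subset_right
        have h5 : (F ∩ T).card ≤ k - m := by
          rw [← cardT]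
          exact Finset.card_le_card Finset.inter_subset_right
        exact hcase (by omega)
      rw [hempty, Finset.sum_empty]
      simp only [hf]
      rcases (by omega : m + t < j ∨ k - m < t) with hlt | hlt
      · rw [Nat.choose_eq_zero_of_lt (by omega : m < j - t)]
        push_cast
        ring
      · rw [Nat.choose_eq_zero_of_lt hlt]
        push_cast
        ring
  -- re-indexing the integer-interval sum
  have step3 : ∑ t ∈ Finset.Icc (max 0 ((j : ℤ) - (m : ℤ))) (min ((k : ℤ) - (m : ℤ)) ((j : ℤ) - 1)),
      f t.toNat = ∑ t ∈ Finset.range j, f t := by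
    rcases Nat.eq_zero_or_pos j with hj0 | hj1
    · subst hj0
      rw [Finset.range_zero, Finset.sum_empty, Finset.Icc_eq_empty (fun h =>
        absurd (le_trans (le_max_left _ _) (le_trans h (min_le_right _ _))) (by omega)),
        Finset.sum_empty]
    · have h1 : ∑ t ∈ Finset.Icc (max 0 ((j : ℤ) - (m : ℤ)))
          (min ((k : ℤ) - (m : ℤ)) ((j : ℤ) - 1)), f t.toNat
          = ∑ t ∈ Finset.Icc (j - m) (min (k - m) (j - 1)), f t := by
        refine Finset.sum_nbij' Int.toNat (Nat.cast : ℕ → ℤ) ?_ ?_ ?_ ?_ ?_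
        · intro a ha
          simp only [Finset.mem_Icc, max_le_iff, le_min_iff] at ha ⊢
          omega
        · intro n hn
          simp only [Finset.mem_Icc, max_le_iff, le_min_iff] at hn ⊢
          omega
        · intro a ha
          simp only [Finset.mem_Icc, max_le_iff, le_min_iff] at ha
          omega
        · intro n hn
          omega
        · intro a ha
          rfl
      rw [h1]
      refine Finset.sum_subset ?_ ?_
      · intro n hn
        simp only [Finset.mem_Icc, le_min_iff] at hn
        rw [Finset.mem_range]
        omega
      · intro n hn hnot
        rw [Finset.mem_range] at hn
        simp only [Finset.mem_Icc, le_min_iff] at hnot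
        simp only [hf]
        rcases (by omega : j - m > n ∨ k - m < n) with hlt | hlt
        · rw [Nat.choose_eq_zero_of_lt (by omega : m < j - n)]
          push_cast
          ring
        · rw [Nat.choose_eq_zero_of_lt hlt]
          push_cast
          ring
  have final : ∫ ω, ξ i ω * ξ (i + m) ω ∂P
      = ∑ t ∈ Finset.Icc (max 0 ((j : ℤ) - (m : ℤ))) (min ((k : ℤ) - (m : ℤ)) ((j : ℤ) - 1)),
        f t.toNat := by
    rw [key, Finset.sum_congr rfl (fun F hF => hPA F ((mem𝔽 F).1 hF).1), step2, ← step3]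
  rw [final]
  exact Finset.sum_congr rfl fun t _ => by simp only [hf]
end

section
/- For all integers k, j with 1 ≤ j ≤ k and every real S with 0 ≤ S ≤ 1, binom(k,j) · S^j · (1-S)^{k-j} ≤ (k e / j)^j · max( ((k-j)/k)^k , (j/k)^k ), where e is Euler's number. -/
-- j^j ≤ e^j * j!
lemma pow_self_le_exp_mul_factorial : ∀ j : ℕ, (j : ℝ) ^ j ≤ Real.exp 1 ^ j * j.factorial := by
  intro j
  induction j with
  | zero => simp
  | succ n ih =>
    have hstep : ((n : ℝ) + 1) ^ n ≤ Real.exp 1 * (n : ℝ) ^ n := by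
      rcases Nat.eq_zero_or_pos n with h | h
      · simp only [h, Nat.cast_zero, zero_add, one_pow, pow_zero, mul_one]
        exact Real.one_le_exp (by norm_num)
      · have hn : (0:ℝ) < n := by exact_mod_cast h
        have h1 : ((n:ℝ) + 1) = (1 + 1 / n) * n := by field_simp
        have h2 : (1 + 1 / (n:ℝ)) ^ n ≤ Real.exp 1 := by
          have := Real.add_one_le_exp (1 / (n:ℝ))
          calc (1 + 1 / (n:ℝ)) ^ n ≤ Real.exp (1 / n) ^ n := by
                apply pow_le_pow_left₀ (by positivity)
                linarith
            _ = Real.exp (n * (1/n)) := by rw [← Real.exp_nat_mul]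
            _ = Real.exp 1 := by rw [mul_one_div, div_self hn.ne']
        calc ((n:ℝ) + 1) ^ n = (1 + 1/(n:ℝ))^n * (n:ℝ)^n := by rw [h1, mul_pow]
          _ ≤ Real.exp 1 * (n:ℝ)^n := by
              apply mul_le_mul_of_nonneg_right h2 (by positivity)
    calc ((n + 1 : ℕ) : ℝ) ^ (n + 1) = ((n:ℝ)+1) * ((n:ℝ)+1) ^ n := by push_cast; ring
      _ ≤ ((n:ℝ)+1) * (Real.exp 1 * (n:ℝ)^n) := by
          apply mul_le_mul_of_nonneg_left hstep (by positivity)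
      _ ≤ ((n:ℝ)+1) * (Real.exp 1 * (Real.exp 1 ^ n * n.factorial)) := by
          apply mul_le_mul_of_nonneg_left _ (by positivity)
          exact mul_le_mul_of_nonneg_left ih (Real.exp_pos 1).le
      _ = Real.exp 1 ^ (n+1) * ((n+1) * n.factorial) := by ring
      _ = Real.exp 1 ^ (n+1) * (n+1).factorial := by
          rw [Nat.factorial_succ]; push_cast; ring

lemma choose_le_bound (k j : ℕ) (hj1 : 1 ≤ j) (hjk : j ≤ k) :
    (k.choose j : ℝ) ≤ ((k : ℝ) * Real.exp 1 / j) ^ j := by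
  have hj : (0:ℝ) < j := by exact_mod_cast hj1
  have h1 : (k.choose j : ℝ) ≤ (k:ℝ)^j / j.factorial := Nat.choose_le_pow_div j k
  have h2 : (j:ℝ)^j ≤ Real.exp 1 ^ j * j.factorial := pow_self_le_exp_mul_factorial j
  have hf : (0:ℝ) < j.factorial := by exact_mod_cast j.factorial_pos
  calc (k.choose j : ℝ) ≤ (k:ℝ)^j / j.factorial := h1
    _ ≤ ((k : ℝ) * Real.exp 1 / j) ^ j := by
        rw [div_pow, mul_pow, div_le_div_iff₀ hf (by positivity)]
        calc (k:ℝ)^j * (j:ℝ)^j ≤ (k:ℝ)^j * (Real.exp 1 ^ j * j.factorial) := by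
              apply mul_le_mul_of_nonneg_left h2 (by positivity)
          _ = (k:ℝ)^j * Real.exp 1 ^ j * j.factorial := by ring

lemma amgm_S (k j : ℕ) (hj1 : 1 ≤ j) (hjk : j < k)
    (S : ℝ) (hS0 : 0 ≤ S) (hS1 : S ≤ 1) :
    S ^ j * (1 - S) ^ (k - j)
      ≤ ((j:ℝ)/k) ^ j * (((k:ℝ) - j)/k) ^ (k - j) := by
  have hj : (0:ℝ) < j := by exact_mod_cast hj1
  have hk : (0:ℝ) < k := lt_of_lt_of_le hj (by exact_mod_cast hjk.le)
  have hd : (0:ℝ) < (k:ℝ) - j := by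
    have : (j:ℝ) < k := by exact_mod_cast hjk
    linarith
  set p₁ : ℝ := S * ((k:ℝ)/j) with hp₁
  set p₂ : ℝ := (1 - S) * ((k:ℝ)/((k:ℝ) - j)) with hp₂
  have hp₁0 : 0 ≤ p₁ := by positivity
  have hp₂0 : 0 ≤ p₂ := by
    apply mul_nonneg (by linarith) (by positivity)
  have hw : (j:ℝ)/k + ((k:ℝ)-j)/k = 1 := by field_simp; ring
  have hgm := Real.geom_mean_le_arith_mean2_weighted
    (by positivity : (0:ℝ) ≤ (j:ℝ)/k) (by positivity : (0:ℝ) ≤ ((k:ℝ)-j)/k)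
    hp₁0 hp₂0 hw
  have hsum : (j:ℝ)/k * p₁ + ((k:ℝ)-j)/k * p₂ = 1 := by
    rw [hp₁, hp₂]; field_simp; ring
  rw [hsum] at hgm
  -- raise to the k-th power
  have hpow : (p₁ ^ ((j:ℝ)/k) * p₂ ^ (((k:ℝ)-j)/k)) ^ k ≤ 1 := by
    apply pow_le_one₀ (by positivity) hgm
  have hkj : (((k - j : ℕ)):ℝ) = (k:ℝ) - j := by
    exact_mod_cast Nat.cast_sub hjk.le
  have hexp : (p₁ ^ ((j:ℝ)/k) * p₂ ^ (((k:ℝ)-j)/k)) ^ k = p₁ ^ j * p₂ ^ (k - j) := by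
    rw [mul_pow, ← Real.rpow_natCast (p₁ ^ ((j:ℝ)/k)) k,
        ← Real.rpow_natCast (p₂ ^ (((k:ℝ)-j)/k)) k,
        ← Real.rpow_natCast p₁ j, ← Real.rpow_natCast p₂ (k - j),
        ← Real.rpow_mul hp₁0, ← Real.rpow_mul hp₂0]
    rw [hkj]
    congr 1
    · congr 1; field_simp
    · congr 1; field_simp
  rw [hexp] at hpow
  have key : S ^ j * (1 - S) ^ (k - j)
      = (p₁ ^ j * p₂ ^ (k - j)) * (((j:ℝ)/k) ^ j * (((k:ℝ) - j)/k) ^ (k - j)) := by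
    have c1 : (k:ℝ)/j * ((j:ℝ)/k) = 1 := by field_simp
    have c2 : (k:ℝ)/((k:ℝ)-j) * (((k:ℝ)-j)/k) = 1 := by field_simp
    have e1 : p₁ * ((j:ℝ)/k) = S := by rw [hp₁, mul_assoc, c1, mul_one]
    have e2 : p₂ * (((k:ℝ)-j)/k) = 1 - S := by rw [hp₂, mul_assoc, c2, mul_one]
    calc S ^ j * (1 - S) ^ (k - j)
        = (p₁ * ((j:ℝ)/k)) ^ j * (p₂ * (((k:ℝ)-j)/k)) ^ (k - j) := by rw [e1, e2]
      _ = (p₁ ^ j * p₂ ^ (k - j)) * (((j:ℝ)/k) ^ j * (((k:ℝ) - j)/k) ^ (k - j)) := by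
          rw [mul_pow, mul_pow, mul_mul_mul_comm, mul_pow]
  rw [key]
  calc (p₁ ^ j * p₂ ^ (k - j)) * (((j:ℝ)/k) ^ j * (((k:ℝ) - j)/k) ^ (k - j))
      ≤ 1 * (((j:ℝ)/k) ^ j * (((k:ℝ) - j)/k) ^ (k - j)) := by
        apply mul_le_mul_of_nonneg_right hpow (by positivity)
    _ = ((j:ℝ)/k) ^ j * (((k:ℝ) - j)/k) ^ (k - j) := one_mul _

lemma max_step (k j : ℕ) (hjk : j ≤ k) (a b : ℝ) (ha : 0 ≤ a) (hb : 0 ≤ b) :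
    b ^ j * a ^ (k - j) ≤ max (a ^ k) (b ^ k) := by
  have hk : j + (k - j) = k := Nat.add_sub_cancel' hjk
  rcases le_total b a with h | h
  · apply le_max_of_le_left
    calc b ^ j * a ^ (k - j) ≤ a ^ j * a ^ (k - j) := by
          apply mul_le_mul_of_nonneg_right (pow_le_pow_left₀ hb h j) (by positivity)
      _ = a ^ k := by rw [← pow_add, hk]
  · apply le_max_of_le_right
    calc b ^ j * a ^ (k - j) ≤ b ^ j * b ^ (k - j) := by
          apply mul_le_mul_of_nonneg_left (pow_le_pow_left₀ ha h _) (by positivity)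
      _ = b ^ k := by rw [← pow_add, hk]

/-- For `1 ≤ j ≤ k` and `S ∈ [0,1]`,
`C(k,j) S^j (1-S)^{k-j} ≤ (k e / j)^j max(((k-j)/k)^k, (j/k)^k)`. -/
theorem choose_mul_pow_le_max
    (k j : ℕ) (hj1 : 1 ≤ j) (hjk : j ≤ k)
    (S : ℝ) (hS0 : 0 ≤ S) (hS1 : S ≤ 1) :
    (k.choose j : ℝ) * S ^ j * (1 - S) ^ (k - j)
      ≤ ((k : ℝ) * Real.exp 1 / j) ^ j
          * max ((((k : ℝ) - j) / k) ^ k) (((j : ℝ) / k) ^ k) := by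
  have hj : (0:ℝ) < j := by exact_mod_cast hj1
  have hk : (0:ℝ) < k := lt_of_lt_of_le hj (by exact_mod_cast hjk)
  have hC : (k.choose j : ℝ) ≤ ((k : ℝ) * Real.exp 1 / j) ^ j := choose_le_bound k j hj1 hjk
  have hCpos : (0:ℝ) ≤ (k.choose j : ℝ) := by positivity
  have h1S : (0:ℝ) ≤ 1 - S := by linarith
  rcases eq_or_lt_of_le hjk with heq | hlt
  · -- j = k
    subst heq
    simp only [Nat.sub_self, pow_zero, mul_one, Nat.choose_self, Nat.cast_one, one_mul]
    have h2 : ((j:ℝ)/j)^j = 1 := by rw [div_self hj.ne']; simp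
    have h3 : S ^ j ≤ 1 := pow_le_one₀ hS0 hS1
    have h4 : (1:ℝ) ≤ ((j : ℝ) * Real.exp 1 / j) ^ j := by
      apply one_le_pow₀
      rw [mul_comm, mul_div_assoc, div_self hj.ne', mul_one]
      exact Real.one_le_exp (by norm_num)
    calc S ^ j ≤ 1 := h3
      _ ≤ ((j : ℝ) * Real.exp 1 / j) ^ j * 1 := by linarith
      _ ≤ ((j : ℝ) * Real.exp 1 / j) ^ j
          * max ((((j : ℝ) - j) / j) ^ j) (((j : ℝ) / j) ^ j) := by
          apply mul_le_mul_of_nonneg_left _ (by positivity)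
          rw [h2]
          exact le_max_right _ _
  · -- j < k
    have hS : S ^ j * (1 - S) ^ (k - j)
        ≤ ((j:ℝ)/k) ^ j * (((k:ℝ) - j)/k) ^ (k - j) := amgm_S k j hj1 hlt S hS0 hS1
    have hM : ((j:ℝ)/k) ^ j * (((k:ℝ) - j)/k) ^ (k - j)
        ≤ max ((((k : ℝ) - j) / k) ^ k) (((j : ℝ) / k) ^ k) := by
      have hd : (j:ℝ) < k := by exact_mod_cast hlt
      exact max_step k j hjk _ _ (div_nonneg (by linarith) hk.le) (by positivity)
    calc (k.choose j : ℝ) * S ^ j * (1 - S) ^ (k - j)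
        = (k.choose j : ℝ) * (S ^ j * (1 - S) ^ (k - j)) := by ring
      _ ≤ ((k : ℝ) * Real.exp 1 / j) ^ j * (S ^ j * (1 - S) ^ (k - j)) := by
          apply mul_le_mul_of_nonneg_right hC (by positivity)
      _ ≤ ((k : ℝ) * Real.exp 1 / j) ^ j
          * max ((((k : ℝ) - j) / k) ^ k) (((j : ℝ) / k) ^ k) := by
          apply mul_le_mul_of_nonneg_left (hS.trans hM) (by positivity)
end
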